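/- arXiv:2205.04082 — 5 statements merged into one kernel-verified Lean document; each statement's English description precedes it below -/
import Mathlib

section
/- Let n ≥ 3 be an integer divisible by 3. Then the maximum of mis(G) over all simple graphs G on n vertices equals 3^{n/3}; that is, every graph G on n vertices satisfies mis(G) ≤ 3^{n/3}, and some graph on n vertices attains this value. -/
/-- A finset of vertices is independent: no two of its elements are adjacent. -/
def IsIndepFinset {V : Type*} (G : SimpleGraph V) (s : Finset V) : Prop :=
  ∀ ⦃a⦄, a ∈ s → ∀ ⦃b⦄, b ∈ s → ¬ G.Adj a b

/-- A finset of vertices is a maximal independent set: it is independent and is not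
properly contained in any other independent set. -/
def IsMaxIndepFinset {V : Type*} (G : SimpleGraph V) (s : Finset V) : Prop :=
  IsIndepFinset G s ∧ ∀ t : Finset V, IsIndepFinset G t → s ⊆ t → s = t

/-- `mis G` is the number of maximal independent sets of `G`. -/
noncomputable def mis {V : Type*} (G : SimpleGraph V) : ℕ :=
  Set.ncard {s : Finset V | IsMaxIndepFinset G s}

/-- `G` has an induced triangle matching of size `t`: there are `t` pairwise disjoint
triples of vertices, each triple pairwise adjacent (a triangle), with no edges between
distinct triples (so the induced subgraph on their union is a disjoint union of `t`
triangles). -/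
def HasInducedTriangleMatching {V : Type*} (G : SimpleGraph V) (t : ℕ) : Prop :=
  ∃ f : Fin t → Finset V,
    (∀ i, (f i).card = 3) ∧
    (∀ i j, i ≠ j → Disjoint (f i) (f j)) ∧
    (∀ i, ∀ a ∈ f i, ∀ b ∈ f i, a ≠ b → G.Adj a b) ∧
    (∀ i j, i ≠ j → ∀ a ∈ f i, ∀ b ∈ f j, ¬ G.Adj a b)

/-- `G` has an induced matching of size `t`: there are `t` pairwise disjoint
pairs of vertices, each pair adjacent, with no edges between distinct pairs. -/
def HasInducedMatching {V : Type*} (G : SimpleGraph V) (t : ℕ) : Prop :=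
  ∃ f : Fin t → Finset V,
    (∀ i, (f i).card = 2) ∧
    (∀ i j, i ≠ j → Disjoint (f i) (f j)) ∧
    (∀ i, ∀ a ∈ f i, ∀ b ∈ f i, a ≠ b → G.Adj a b) ∧
    (∀ i j, i ≠ j → ∀ a ∈ f i, ∀ b ∈ f j, ¬ G.Adj a b)

open Finset


section MM

variable {V : Type*} [Fintype V] [DecidableEq V] (G : SimpleGraph V)

/-- `s` is independent and contained in `W`. -/
def MMIndepIn (W s : Finset V) : Prop := s ⊆ W ∧ IsIndepFinset G s

/-- `s` is a maximal independent subset of `W`. -/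
def MMMaxIn (W s : Finset V) : Prop :=
  MMIndepIn G W s ∧ ∀ t : Finset V, MMIndepIn G W t → s ⊆ t → s = t

noncomputable def misOnF (W : Finset V) : Finset (Finset V) := by
  classical exact univ.filter (MMMaxIn G W)

lemma mem_misOnF {W s : Finset V} : s ∈ misOnF G W ↔ MMMaxIn G W s := by
  classical simp [misOnF]

lemma cube_le_three_pow (k : ℕ) : k ^ 3 ≤ 3 ^ k := by
  induction k with
  | zero => decide
  | succ m ih =>
    rcases Nat.lt_or_ge m 3 with h | h
    · interval_cases m <;> decide
    · have h2 : 3 * (m * m) ≤ m * (m * m) := Nat.mul_le_mul_right _ h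
      have h3 : 3 * m ≤ m * m := Nat.mul_le_mul_right _ h
      have h1 : (m + 1) ^ 3 ≤ 3 * m ^ 3 := by nlinarith [h, h2, h3]
      calc (m + 1) ^ 3 ≤ 3 * m ^ 3 := h1
        _ ≤ 3 * 3 ^ m := by omega
        _ = 3 ^ (m + 1) := by ring

/-- closed neighborhood of `u` within `W` -/
noncomputable def MMN (W : Finset V) (u : V) : Finset V := by
  classical exact insert u (W.filter (G.Adj u))

lemma key : ∀ W : Finset V, (misOnF G W).card ^ 3 ≤ 3 ^ W.card := by
  classical
  intro W
  induction W using Finset.strongInduction with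
  | _ W ih =>
  rcases W.eq_empty_or_nonempty with rfl | hW
  · -- only the empty set can be maximal independent in ∅
    have hsub : misOnF G ∅ ⊆ {∅} := by
      intro s hs
      rw [mem_misOnF] at hs
      simp [Finset.subset_empty.mp hs.1.1]
    have := Finset.card_le_card hsub
    simp only [Finset.card_singleton] at this
    calc (misOnF G ∅).card ^ 3 ≤ 1 ^ 3 := Nat.pow_le_pow_left this 3
      _ ≤ 3 ^ (∅ : Finset V).card := by simp
  · -- pick a vertex of minimum degree within W
    obtain ⟨v, hvW, hvmin⟩ := W.exists_min_image (fun u => (W.filter (G.Adj u)).card) hW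
    set d := (W.filter (G.Adj v)).card with hd
    have hNsub : ∀ u ∈ W, MMN G W u ⊆ W := by
      intro u hu
      exact Finset.insert_subset hu (Finset.filter_subset _ _)
    have hNcard : ∀ u : V, (MMN G W u).card = (W.filter (G.Adj u)).card + 1 := by
      intro u
      have : u ∉ W.filter (G.Adj u) := by simp [G.irrefl]
      simp [MMN, Finset.card_insert_of_notMem this]
    have hNvW : MMN G W v ⊆ W := hNsub v hvW
    have hNvcard : (MMN G W v).card = d + 1 := hNcard v
    -- every maximal independent set in W meets N[v]
    have hmeets : ∀ s ∈ misOnF G W, ∃ u ∈ MMN G W v, u ∈ s := by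
      intro s hs
      rw [mem_misOnF] at hs
      by_contra hcon
      push_neg at hcon
      have hvns : v ∉ s := fun h => hcon v (Finset.mem_insert_self _ _) h
      have hindep : IsIndepFinset G (insert v s) := by
        intro a ha b hb hab
        rcases Finset.mem_insert.mp ha with rfl | ha' <;>
          rcases Finset.mem_insert.mp hb with rfl | hb'
        · exact G.irrefl hab
        · exact hcon b (Finset.mem_insert_of_mem (Finset.mem_filter.mpr ⟨hs.1.1 hb', hab⟩)) hb'
        · exact hcon a (Finset.mem_insert_of_mem (Finset.mem_filter.mpr ⟨hs.1.1 ha', hab.symm⟩)) ha'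
        · exact hs.1.2 ha' hb' hab
      have heq := hs.2 (insert v s) ⟨Finset.insert_subset hvW hs.1.1, hindep⟩
        (Finset.subset_insert _ _)
      exact hvns (heq ▸ Finset.mem_insert_self v s)
    -- if u ∈ s and s max in W, then erase works
    have herase : ∀ s ∈ misOnF G W, ∀ u ∈ s, s.erase u ∈ misOnF G (W \ MMN G W u) := by
      intro s hs u hus
      rw [mem_misOnF] at hs ⊢
      have hsW := hs.1.1
      have hsInd := hs.1.2
      constructor
      · constructor
        · intro a ha
          obtain ⟨hau, has⟩ := Finset.mem_erase.mp ha
          refine Finset.mem_sdiff.mpr ⟨hsW has, ?_⟩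
          simp only [MMN, Finset.mem_insert, Finset.mem_filter]
          push_neg
          exact ⟨hau, fun _ => hsInd hus has⟩
        · intro a ha b hb
          exact hsInd (Finset.mem_of_mem_erase ha) (Finset.mem_of_mem_erase hb)
      · intro t ht hsub
        have hut : u ∉ t := by
          intro h
          have := ht.1 h
          rw [Finset.mem_sdiff] at this
          exact this.2 (Finset.mem_insert_self _ _)
        have htind : IsIndepFinset G (insert u t) := by
          intro a ha b hb hab
          have hnadj : ∀ c ∈ t, ¬ G.Adj u c := by
            intro c hc hadj
            have := ht.1 hc
            rw [Finset.mem_sdiff] at this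
            exact this.2 (Finset.mem_insert_of_mem (Finset.mem_filter.mpr ⟨this.1, hadj⟩))
          rcases Finset.mem_insert.mp ha with rfl | ha' <;>
            rcases Finset.mem_insert.mp hb with rfl | hb'
          · exact G.irrefl hab
          · exact hnadj b hb' hab
          · exact hnadj a ha' hab.symm
          · exact ht.2 ha' hb' hab
        have htW : insert u t ⊆ W := by
          refine Finset.insert_subset (hsW hus) ?_
          intro a ha
          exact (Finset.mem_sdiff.mp (ht.1 ha)).1
        have hst : s ⊆ insert u t := by
          intro a ha
          rcases eq_or_ne a u with rfl | hau
          · exact Finset.mem_insert_self _ _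
          · exact Finset.mem_insert_of_mem (hsub (Finset.mem_erase.mpr ⟨hau, ha⟩))
        have heq := hs.2 (insert u t) ⟨htW, htind⟩ hst
        -- s = insert u t, so t = s.erase u
        apply Finset.Subset.antisymm hsub
        intro a ha
        have hau : a ≠ u := fun h => hut (h ▸ ha)
        have has : a ∈ s := by rw [heq]; exact Finset.mem_insert_of_mem ha
        exact Finset.mem_erase.mpr ⟨hau, has⟩
    -- the covering by a biUnion
    have hcover : misOnF G W ⊆ (MMN G W v).biUnion
        (fun u => (misOnF G (W \ MMN G W u)).image (insert u)) := by
      intro s hs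
      obtain ⟨u, huN, hus⟩ := hmeets s hs
      refine Finset.mem_biUnion.mpr ⟨u, huN, ?_⟩
      refine Finset.mem_image.mpr ⟨s.erase u, herase s hs u hus, Finset.insert_erase hus⟩
    -- set m = sup of cardinalities
    set m := (MMN G W v).sup (fun u => (misOnF G (W \ MMN G W u)).card) with hm
    have hdW : ∀ u ∈ MMN G W v, (W \ MMN G W u) ⊂ W := by
      intro u hu
      have huW : u ∈ W := hNvW hu
      refine Finset.ssubset_iff_of_subset (Finset.sdiff_subset) |>.mpr ⟨u, huW, ?_⟩
      simp [MMN]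
    have hcards : (misOnF G W).card ≤ (d + 1) * m := by
      calc (misOnF G W).card ≤ ((MMN G W v).biUnion
            (fun u => (misOnF G (W \ MMN G W u)).image (insert u))).card :=
            Finset.card_le_card hcover
        _ ≤ ∑ u ∈ MMN G W v, ((misOnF G (W \ MMN G W u)).image (insert u)).card :=
            Finset.card_biUnion_le
        _ ≤ ∑ u ∈ MMN G W v, (misOnF G (W \ MMN G W u)).card :=
            Finset.sum_le_sum (fun u _ => Finset.card_image_le)
        _ ≤ (MMN G W v).card • m :=
            Finset.sum_le_card_nsmul _ _ m (fun u hu => by rw [hm]; exact Finset.le_sup (f := fun u => (misOnF G (W \ MMN G W u)).card) hu)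
        _ = (d + 1) * m := by rw [hNvcard, smul_eq_mul]
    have hmcube : m ^ 3 ≤ 3 ^ (W.card - (d + 1)) := by
      obtain ⟨u₀, hu₀, hequ⟩ := Finset.exists_mem_eq_sup (MMN G W v)
        ⟨v, Finset.mem_insert_self _ _⟩ (fun u => (misOnF G (W \ MMN G W u)).card)
      have hu₀W : u₀ ∈ W := hNvW hu₀
      have h1 : m ^ 3 ≤ 3 ^ (W \ MMN G W u₀).card := by
        rw [hm, hequ]; exact ih _ (hdW u₀ hu₀)
      have h2 : (W \ MMN G W u₀).card = W.card - (MMN G W u₀).card :=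
        Finset.card_sdiff_of_subset (hNsub u₀ hu₀W)
      have h3 : d + 1 ≤ (MMN G W u₀).card := by
        rw [hNcard u₀]
        exact Nat.add_le_add_right (hvmin u₀ hu₀W) 1
      calc m ^ 3 ≤ 3 ^ (W \ MMN G W u₀).card := h1
        _ ≤ 3 ^ (W.card - (d + 1)) := by
            apply Nat.pow_le_pow_right (by norm_num)
            omega
    have hdle : d + 1 ≤ W.card := hNvcard ▸ Finset.card_le_card hNvW
    calc (misOnF G W).card ^ 3 ≤ ((d + 1) * m) ^ 3 := Nat.pow_le_pow_left hcards 3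
      _ = (d + 1) ^ 3 * m ^ 3 := by ring
      _ ≤ 3 ^ (d + 1) * 3 ^ (W.card - (d + 1)) :=
          Nat.mul_le_mul (cube_le_three_pow (d + 1)) hmcube
      _ = 3 ^ W.card := by
          rw [← pow_add]
          congr 1
          omega

end MM


/-- disjoint union of triangles: `a ~ b` iff distinct and same block of 3. -/
def mmTriG (n : ℕ) : SimpleGraph (Fin n) where
  Adj a b := a ≠ b ∧ (a : ℕ) / 3 = (b : ℕ) / 3
  symm := ⟨fun a b h => ⟨h.1.symm, h.2.symm⟩⟩
  loopless := ⟨fun a h => h.1 rfl⟩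

def mmEmb {n k : ℕ} (hk : n = 3 * k) (g : Fin k) (r : Fin 3) : Fin n :=
  ⟨3 * g.val + r.val, by have h1 := g.isLt; have h2 := r.isLt; omega⟩

lemma mmEmb_div {n k : ℕ} (hk : n = 3 * k) (g : Fin k) (r : Fin 3) :
    ((mmEmb hk g r : Fin n) : ℕ) / 3 = g.val := by
  have h2 := r.isLt
  simp only [mmEmb]
  omega

lemma mmEmb_mod {n k : ℕ} (hk : n = 3 * k) (g : Fin k) (r : Fin 3) :
    ((mmEmb hk g r : Fin n) : ℕ) % 3 = r.val := by
  have h2 := r.isLt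
  simp only [mmEmb]
  omega

noncomputable def mmPhi {n k : ℕ} (hk : n = 3 * k) (f : Fin k → Fin 3) : Finset (Fin n) :=
  Finset.image (fun g => mmEmb hk g (f g)) Finset.univ

lemma mmDivLt {n k : ℕ} (hk : n = 3 * k) (x : Fin n) : (x : ℕ) / 3 < k := by
  have := x.isLt
  omega

lemma mmPhi_max {n k : ℕ} (hk : n = 3 * k) (f : Fin k → Fin 3) :
    IsMaxIndepFinset (mmTriG n) (mmPhi hk f) := by
  constructor
  · intro a ha b hb hadj
    obtain ⟨g, -, rfl⟩ := Finset.mem_image.mp ha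
    obtain ⟨g', -, rfl⟩ := Finset.mem_image.mp hb
    have hgg : g.val = g'.val := by
      have := hadj.2
      rwa [mmEmb_div, mmEmb_div] at this
    exact hadj.1 (by rw [Fin.ext hgg])
  · intro t ht hsub
    apply Finset.Subset.antisymm hsub
    intro x hx
    have hg : (x : ℕ) / 3 < k := mmDivLt hk x
    set g : Fin k := ⟨(x : ℕ) / 3, hg⟩ with hgdef
    have hy : mmEmb hk g (f g) ∈ t := hsub (Finset.mem_image.mpr ⟨g, Finset.mem_univ g, rfl⟩)
    rcases eq_or_ne x (mmEmb hk g (f g)) with heq | hne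
    · rw [heq]; exact Finset.mem_image.mpr ⟨g, Finset.mem_univ g, rfl⟩
    · exfalso
      refine ht hx hy ⟨hne, ?_⟩
      rw [mmEmb_div]
  -- unreachable

lemma mmMax_eq_phi {n k : ℕ} (hk : n = 3 * k) (s : Finset (Fin n))
    (hs : IsMaxIndepFinset (mmTriG n) s) : ∃ f : Fin k → Fin 3, mmPhi hk f = s := by
  classical
  have huniq : ∀ x ∈ s, ∀ y ∈ s, (x : ℕ) / 3 = (y : ℕ) / 3 → x = y := by
    intro x hx y hy hxy
    by_contra hne
    exact hs.1 hx hy ⟨hne, hxy⟩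
  have hcover : ∀ g : Fin k, ∃ x ∈ s, (x : ℕ) / 3 = g.val := by
    intro g
    by_contra hcon
    push_neg at hcon
    set z := mmEmb hk g (0 : Fin 3) with hz
    have hzdiv : (z : ℕ) / 3 = g.val := mmEmb_div hk g 0
    have hzs : z ∉ s := fun h => hcon z h hzdiv
    have hind : IsIndepFinset (mmTriG n) (insert z s) := by
      intro a ha b hb hadj
      rcases Finset.mem_insert.mp ha with rfl | ha' <;>
        rcases Finset.mem_insert.mp hb with rfl | hb'
      · exact hadj.1 rfl
      · exact hcon b hb' (hadj.2 ▸ hzdiv)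
      · exact hcon a ha' (hadj.2.symm ▸ hzdiv)
      · exact hs.1 ha' hb' hadj
    have := hs.2 (insert z s) hind (Finset.subset_insert _ _)
    exact hzs (this ▸ Finset.mem_insert_self z s)
  choose w hw hwdiv using hcover
  refine ⟨fun g => ⟨(w g : ℕ) % 3, Nat.mod_lt _ (by norm_num)⟩, ?_⟩
  have hemb : ∀ g : Fin k, mmEmb hk g ⟨(w g : ℕ) % 3, Nat.mod_lt _ (by norm_num)⟩ = w g := by
    intro g
    apply Fin.ext
    show 3 * g.val + (w g : ℕ) % 3 = (w g : ℕ)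
    have := hwdiv g
    omega
  apply Finset.Subset.antisymm
  · intro x hx
    obtain ⟨g, -, rfl⟩ := Finset.mem_image.mp hx
    rw [hemb g]
    exact hw g
  · intro x hx
    have hg : (x : ℕ) / 3 < k := mmDivLt hk x
    set g : Fin k := ⟨(x : ℕ) / 3, hg⟩ with hgdef
    have hxw : x = w g := huniq x hx (w g) (hw g) (by rw [hwdiv g])
    refine Finset.mem_image.mpr ⟨g, Finset.mem_univ g, ?_⟩
    rw [hemb g, hxw]

lemma mmPhi_inj {n k : ℕ} (hk : n = 3 * k) : Function.Injective (mmPhi hk) := by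
  intro f f' h
  funext g
  have hmem : mmEmb hk g (f g) ∈ mmPhi hk f' :=
    h ▸ Finset.mem_image.mpr ⟨g, Finset.mem_univ g, rfl⟩
  obtain ⟨g', -, hg'⟩ := Finset.mem_image.mp hmem
  have hdiv : g'.val = g.val := by
    have := congrArg (fun x : Fin n => (x : ℕ) / 3) hg'
    simpa [mmEmb_div] using this
  have hmod : (f' g').val = (f g).val := by
    have := congrArg (fun x : Fin n => (x : ℕ) % 3) hg'
    simpa [mmEmb_mod] using this
  have : g' = g := Fin.ext hdiv
  subst this
  exact (Fin.ext hmod).symm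

lemma mm_lower (n k : ℕ) (hk : n = 3 * k) : mis (mmTriG n) = 3 ^ k := by
  classical
  have hset : {s : Finset (Fin n) | IsMaxIndepFinset (mmTriG n) s}
      = ↑(Finset.image (mmPhi hk) Finset.univ) := by
    ext s
    simp only [Set.mem_setOf_eq, Finset.coe_image, Set.mem_image, Finset.mem_coe,
      Finset.mem_univ, true_and]
    constructor
    · intro h
      obtain ⟨f, hf⟩ := mmMax_eq_phi hk s h
      exact ⟨f, hf⟩
    · rintro ⟨f, -, rfl⟩
      exact mmPhi_max hk f
  rw [mis, hset, Set.ncard_coe_finset, Finset.card_image_of_injective _ (mmPhi_inj hk),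
    Finset.card_univ]
  simp

lemma mis_eq_misOnF {V : Type*} [Fintype V] [DecidableEq V] (G : SimpleGraph V) :
    mis G = (misOnF G Finset.univ).card := by
  classical
  have hset : {s : Finset V | IsMaxIndepFinset G s} = ↑(misOnF G Finset.univ) := by
    ext s
    simp only [Set.mem_setOf_eq, Finset.mem_coe, mem_misOnF]
    constructor
    · intro h
      exact ⟨⟨Finset.subset_univ s, h.1⟩, fun t ht hsub => h.2 t ht.2 hsub⟩
    · intro h
      exact ⟨h.1.2, fun t ht hsub => h.2 t ⟨Finset.subset_univ t, ht⟩ hsub⟩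
  rw [mis, hset, Set.ncard_coe_finset]

theorem moon_moser_zero_mod_three (n : ℕ) (hn : 3 ≤ n) (hdvd : 3 ∣ n) :
    (∀ G : SimpleGraph (Fin n), mis G ≤ 3 ^ (n / 3)) ∧
    (∃ G : SimpleGraph (Fin n), mis G = 3 ^ (n / 3)) := by
  constructor
  · intro G
    classical
    have h1 : mis G = (misOnF G Finset.univ).card := mis_eq_misOnF G
    have h2 : (misOnF G Finset.univ).card ^ 3 ≤ 3 ^ n := by
      have := key G Finset.univ
      simpa using this
    have h3 : mis G ^ 3 ≤ (3 ^ (n / 3)) ^ 3 := by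
      rw [h1, ← pow_mul]
      calc (misOnF G Finset.univ).card ^ 3 ≤ 3 ^ n := h2
        _ = 3 ^ (n / 3 * 3) := by congr 1; omega
    exact (Nat.pow_le_pow_iff_left (by norm_num)).mp h3
  · exact ⟨mmTriG n, mm_lower n (n / 3) (by omega)⟩
end

section
/- Let n ≥ 4 be an integer with n ≡ 1 (mod 3). Then the maximum of mis(G) over all simple graphs G on n vertices equals 4 · 3^{(n−4)/3}; that is, every graph G on n vertices satisfies mis(G) ≤ 4 · 3^{(n−4)/3}, and some graph on n vertices attains this value. -/
set_option linter.unusedSectionVars false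



def mmg : ℕ → ℕ
  | 0 => 1
  | 1 => 1
  | 2 => 2
  | 3 => 3
  | 4 => 4
  | (n+5) => 3 * mmg (n+2)

lemma mmg_rec (n : ℕ) (h : 2 ≤ n) : mmg (n + 3) = 3 * mmg n := by
  obtain ⟨m, rfl⟩ : ∃ m, n = m + 2 := ⟨n - 2, by omega⟩
  rfl

lemma mmg_pos (n : ℕ) : 0 < mmg n := by
  induction n using Nat.strong_induction_on with
  | _ n ih =>
    match n with
    | 0 | 1 | 2 | 3 | 4 => simp [mmg]
    | (m+5) =>
      have := ih (m+2) (by omega)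
      simp only [mmg]; omega

lemma mmg_le_succ (n : ℕ) : mmg n ≤ mmg (n + 1) := by
  induction n using Nat.strong_induction_on with
  | _ n ih =>
    match n with
    | 0 | 1 | 2 | 3 => simp [mmg]
    | 4 => show mmg 4 ≤ mmg 5; show (4:ℕ) ≤ 3 * mmg 2; simp [mmg]
    | (m+5) =>
      have h : mmg (m+2) ≤ mmg (m+3) := ih (m+2) (by omega)
      show 3 * mmg (m+2) ≤ 3 * mmg (m+3)
      omega

lemma mmg_mono : Monotone mmg := monotone_nat_of_le_succ mmg_le_succ

lemma mmg_two (n : ℕ) : 2 * mmg n ≤ mmg (n + 2) := by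
  induction n using Nat.strong_induction_on with
  | _ n ih =>
    match n with
    | 0 | 1 | 2 => simp [mmg]
    | 3 => show 2 * 3 ≤ 3 * mmg 2; simp [mmg]
    | 4 => show 2 * 4 ≤ 3 * mmg 3; simp [mmg]
    | (m+5) =>
      have h0 : 2 * mmg (m+2) ≤ mmg (m+4) := ih (m+2) (by omega)
      have h1 : mmg (m+5) = 3 * mmg (m+2) := rfl
      have h2 : mmg (m+5+2) = 3 * mmg (m+4) := mmg_rec (m+4) (by omega)
      omega

lemma mmg_three (n : ℕ) : 3 * mmg n ≤ mmg (n + 3) := by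
  match n with
  | 0 => simp [mmg]
  | 1 => simp [mmg]
  | (m+2) => rw [mmg_rec (m+2) (by omega)]

lemma mmg_key (k : ℕ) : ∀ n, 1 ≤ k → k ≤ n → k * mmg (n - k) ≤ mmg n := by
  induction k using Nat.strong_induction_on with
  | _ k ih =>
    intro n hk hkn
    match k with
    | 1 => simpa using mmg_mono (by omega : n - 1 ≤ n)
    | 2 =>
      have := mmg_two (n - 2)
      have : 2 * mmg (n-2) ≤ mmg (n - 2 + 2) := this
      rwa [Nat.sub_add_cancel hkn] at this
    | 3 =>
      have := mmg_three (n - 3)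
      rwa [Nat.sub_add_cancel hkn] at this
    | (m+4) =>
      have h1 : (m+4) * mmg (n - (m+4)) ≤ 2 * ((m+2) * mmg ((n-2) - (m+2))) := by
        have : (n - 2) - (m + 2) = n - (m+4) := by omega
        rw [this]; nlinarith [mmg_pos (n - (m+4))]
      have h2 : (m+2) * mmg ((n-2) - (m+2)) ≤ mmg (n-2) := ih (m+2) (by omega) (n-2) (by omega) (by omega)
      have h3 : 2 * mmg (n-2) ≤ mmg n := by
        have := mmg_two (n-2)
        rwa [Nat.sub_add_cancel (by omega : 2 ≤ n)] at this
      omega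

lemma mmg_val (t : ℕ) : mmg (4 + 3 * t) = 4 * 3 ^ t := by
  induction t with
  | zero => rfl
  | succ t ih =>
    have : 4 + 3 * (t+1) = (4 + 3 * t) + 3 := by ring
    rw [this, mmg_rec _ (by omega), ih, pow_succ]; ring

open Finset

lemma mis_eq_card {V : Type*} [Fintype V] (G : SimpleGraph V)
    [DecidablePred (IsMaxIndepFinset G)] :
    mis G = (univ.filter (IsMaxIndepFinset G)).card := by
  rw [mis]
  have h : {s : Finset V | IsMaxIndepFinset G s} = ↑(univ.filter (IsMaxIndepFinset G)) := by
    ext s; simp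
  rw [h, Set.ncard_coe_finset]

lemma mis_le_mmg : ∀ (n : ℕ) (V : Type) [Fintype V] [DecidableEq V] (G : SimpleGraph V),
    Fintype.card V = n → mis G ≤ mmg n := by
  intro n
  induction n using Nat.strong_induction_on with
  | _ n ih =>
    intro V _ _ G hcard
    classical
    set M : Finset (Finset V) := univ.filter (IsMaxIndepFinset G) with hM
    have hmis : mis G = M.card := mis_eq_card G
    rcases Nat.eq_zero_or_pos n with h0 | hpos
    · subst h0
      have h1 : M.card ≤ Fintype.card (Finset V) := card_le_univ M
      have h2 : Fintype.card (Finset V) = 2 ^ Fintype.card V := Fintype.card_finset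
      rw [hcard, pow_zero] at h2
      have := mmg_pos 0
      omega
    have hne : Nonempty V := Fintype.card_pos_iff.mp (by omega)
    set deg : V → ℕ := fun u => (univ.filter (fun w => G.Adj u w)).card with hdeg
    obtain ⟨v, -, hv⟩ := Finset.exists_min_image univ deg univ_nonempty
    set Nv : Finset V := insert v (univ.filter (fun w => G.Adj v w)) with hNv
    -- every maximal independent set meets Nv
    have hmeets : ∀ s ∈ M, ∃ u ∈ Nv, u ∈ s := by
      intro s hs
      by_contra hcon
      push_neg at hcon
      have hs' : IsMaxIndepFinset G s := (mem_filter.mp hs).2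
      have hvs : v ∉ s := fun h => hcon v (mem_insert_self _ _) h
      have hindep : IsIndepFinset G (insert v s) := by
        intro a ha b hb hadj
        rcases mem_insert.mp ha with rfl | ha' <;> rcases mem_insert.mp hb with rfl | hb'
        · exact G.irrefl hadj
        · exact hcon b (by simp [hNv, hadj]) hb'
        · exact hcon a (by simp [hNv, hadj.symm]) ha'
        · exact hs'.1 ha' hb' hadj
      have := hs'.2 (insert v s) hindep (subset_insert _ _)
      exact hvs (this ▸ mem_insert_self v s)
    have hsub : M ⊆ Nv.biUnion (fun u => M.filter (fun s => u ∈ s)) := by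
      intro s hs
      obtain ⟨u, hu, hus⟩ := hmeets s hs
      exact mem_biUnion.mpr ⟨u, hu, mem_filter.mpr ⟨hs, hus⟩⟩
    -- the key bound for each u ∈ Nv
    have hstep : ∀ u, (M.filter (fun s => u ∈ s)).card ≤ mmg (n - 1 - deg u) := by
      intro u
      set su : Finset V := univ.filter (fun w => w ≠ u ∧ ¬ G.Adj u w) with hsu
      set W := {w : V // w ∈ su}
      set G' : SimpleGraph W := G.comap Subtype.val with hG'
      have hsucard : su.card = n - 1 - deg u := by
        have he : su = (insert u (univ.filter (fun w => G.Adj u w)))ᶜ := by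
          ext w
          simp only [hsu, mem_filter, mem_univ, true_and, mem_compl, mem_insert, not_or]
        have hu1 : u ∉ univ.filter (fun w => G.Adj u w) := by simp
        have hins : (insert u (univ.filter (fun w => G.Adj u w))).card = deg u + 1 :=
          card_insert_of_notMem hu1
        rw [he, card_compl, hins, hcard]
        omega
      have hWcard : Fintype.card W = n - 1 - deg u := by
        rw [Fintype.card_coe, hsucard]
      have hIH : mis G' ≤ mmg (n - 1 - deg u) :=
        ih (n - 1 - deg u) (by omega) W G' hWcard
      rw [mis_eq_card G'] at hIH
      refine le_trans ?_ hIH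
      set φ : Finset V → Finset W := fun s => s.subtype (· ∈ su) with hφ
      -- elements of an independent set containing u, other than u, lie in su
      have hkey : ∀ s : Finset V, IsIndepFinset G s → u ∈ s → ∀ w ∈ s, w ≠ u → w ∈ su := by
        intro s hs hu w hw hwu
        simp only [hsu, mem_filter, mem_univ, true_and]
        exact ⟨hwu, hs hu hw⟩
      have hdecomp : ∀ s : Finset V, IsIndepFinset G s → u ∈ s →
          s = insert u (s.filter (· ∈ su)) := by
        intro s hs hu
        ext x
        simp only [mem_insert, mem_filter]
        constructor
        · intro hx
          by_cases hxu : x = u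
          · exact Or.inl hxu
          · exact Or.inr ⟨hx, hkey s hs hu x hx hxu⟩
        · rintro (rfl | ⟨hx, -⟩) <;> [exact hu; exact hx]
      apply Finset.card_le_card_of_injOn φ
      · intro s hs
        simp only [hM, Finset.mem_coe, mem_filter, mem_univ, true_and] at hs
        obtain ⟨hsmax, hus⟩ := hs
        simp only [Finset.mem_coe, mem_filter, mem_univ, true_and]
        constructor
        · intro a ha b hb hadj
          exact hsmax.1 (Finset.mem_subtype.mp ha) (Finset.mem_subtype.mp hb) hadj
        · intro t' ht' hsubt
          have hT : IsIndepFinset G (insert u (t'.image Subtype.val)) := by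
            intro a ha b hb hadj
            rcases mem_insert.mp ha with rfl | ha' <;> rcases mem_insert.mp hb with rfl | hb'
            · exact G.irrefl hadj
            · obtain ⟨y, hy, rfl⟩ := Finset.mem_image.mp hb'
              have := y.2
              simp only [hsu, mem_filter, mem_univ, true_and] at this
              exact this.2 hadj
            · obtain ⟨y, hy, rfl⟩ := Finset.mem_image.mp ha'
              have := y.2
              simp only [hsu, mem_filter, mem_univ, true_and] at this
              exact this.2 hadj.symm
            · obtain ⟨x, hx, rfl⟩ := Finset.mem_image.mp ha'
              obtain ⟨y, hy, rfl⟩ := Finset.mem_image.mp hb'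
              exact ht' hx hy hadj
          have hsT : s ⊆ insert u (t'.image Subtype.val) := by
            intro x hx
            by_cases hxu : x = u
            · exact hxu ▸ mem_insert_self _ _
            · have hxsu : x ∈ su := hkey s hsmax.1 hus x hx hxu
              have : (⟨x, hxsu⟩ : W) ∈ φ s := Finset.mem_subtype.mpr hx
              exact mem_insert_of_mem (Finset.mem_image.mpr ⟨⟨x, hxsu⟩, hsubt this, rfl⟩)
          have hseq := hsmax.2 _ hT hsT
          refine Finset.Subset.antisymm hsubt ?_
          intro y hy
          have hyT : (y : V) ∈ insert u (t'.image Subtype.val) :=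
            Finset.mem_image.mpr ⟨y, hy, rfl⟩ |> mem_insert_of_mem
          have : (y : V) ∈ s := hseq ▸ hyT
          exact Finset.mem_subtype.mpr this
      · intro s₁ hs₁ s₂ hs₂ heq
        simp only [coe_filter, Set.mem_setOf_eq, hM, mem_filter, mem_univ, true_and] at hs₁ hs₂
        have e1 := hdecomp s₁ hs₁.1.1 hs₁.2
        have e2 := hdecomp s₂ hs₂.1.1 hs₂.2
        have hf : s₁.filter (· ∈ su) = s₂.filter (· ∈ su) := by
          have := congrArg (fun t => Finset.map (Function.Embedding.subtype (· ∈ su)) t) heq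
          simpa only [hφ, Finset.subtype_map] using this
        rw [e1, e2, hf]
    -- assemble
    have hNvcard : Nv.card = deg v + 1 := by
      rw [hNv, card_insert_of_notMem (by simp)]
    have hdegv_le : deg v ≤ n - 1 := by
      have : univ.filter (fun w => G.Adj v w) ⊆ univ.erase v := by
        intro w hw
        simp only [mem_filter, mem_univ, true_and] at hw
        exact mem_erase.mpr ⟨fun h => G.irrefl (h ▸ hw), mem_univ w⟩
      have hc := card_le_card this
      rw [card_erase_of_mem (mem_univ v), card_univ, hcard] at hc
      exact hc
    have hchain : M.card ≤ (deg v + 1) * mmg (n - 1 - deg v) := by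
      calc M.card ≤ (Nv.biUnion (fun u => M.filter (fun s => u ∈ s))).card := card_le_card hsub
        _ ≤ ∑ u ∈ Nv, (M.filter (fun s => u ∈ s)).card := card_biUnion_le
        _ ≤ ∑ u ∈ Nv, mmg (n - 1 - deg v) := by
            apply Finset.sum_le_sum
            intro u hu
            refine le_trans (hstep u) (mmg_mono ?_)
            have := hv u (mem_univ u)
            omega
        _ = Nv.card * mmg (n - 1 - deg v) := by rw [Finset.sum_const, smul_eq_mul]
        _ = (deg v + 1) * mmg (n - 1 - deg v) := by rw [hNvcard]
    have hfin : (deg v + 1) * mmg (n - (deg v + 1)) ≤ mmg n :=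
      mmg_key (deg v + 1) n (by omega) (by omega)
    have heq2 : n - 1 - deg v = n - (deg v + 1) := by omega
    rw [heq2] at hchain
    rw [hmis]
    omega

section Transport

variable {V W : Type*} [DecidableEq V] [DecidableEq W]

lemma maxIndep_map (e : V ≃ W) (G : SimpleGraph W) (s : Finset V)
    (h : IsMaxIndepFinset (G.comap e) s) : IsMaxIndepFinset G (s.map e.toEmbedding) := by
  obtain ⟨hind, hmax⟩ := h
  constructor
  · intro a ha b hb hadj
    obtain ⟨x, hx, rfl⟩ := Finset.mem_map.mp ha
    obtain ⟨y, hy, rfl⟩ := Finset.mem_map.mp hb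
    exact hind hx hy hadj
  · intro t ht hsub
    have hs' : s ⊆ t.map e.symm.toEmbedding := by
      intro x hx
      refine Finset.mem_map.mpr ⟨e x, hsub (Finset.mem_map.mpr ⟨x, hx, rfl⟩), by simp⟩
    have ht' : IsIndepFinset (G.comap e) (t.map e.symm.toEmbedding) := by
      intro x hx y hy hadj
      obtain ⟨a, ha, rfl⟩ := Finset.mem_map.mp hx
      obtain ⟨b, hb, rfl⟩ := Finset.mem_map.mp hy
      have : G.Adj a b := by simpa using hadj
      exact ht ha hb this
    have heq := hmax _ ht' hs'
    rw [heq, Finset.map_map]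
    have : e.symm.toEmbedding.trans e.toEmbedding = Function.Embedding.refl W := by
      ext w; simp
    rw [this, Finset.map_refl]

lemma mis_comap (e : V ≃ W) (G : SimpleGraph W) : mis (G.comap e) = mis G := by
  have hGG : (G.comap ⇑e).comap ⇑e.symm = G := by
    ext a b; simp
  have hset : {s : Finset W | IsMaxIndepFinset G s} =
      (fun s : Finset V => s.map e.toEmbedding) '' {s | IsMaxIndepFinset (G.comap e) s} := by
    ext σ
    constructor
    · intro hσ
      have : IsMaxIndepFinset ((G.comap ⇑e).comap ⇑e.symm) σ := by rwa [hGG]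
      refine ⟨σ.map e.symm.toEmbedding, maxIndep_map e.symm (G.comap ⇑e) σ this, ?_⟩
      show Finset.map e.toEmbedding (σ.map e.symm.toEmbedding) = σ
      rw [Finset.map_map]
      have : e.symm.toEmbedding.trans e.toEmbedding = Function.Embedding.refl W := by
        ext w; simp
      rw [this, Finset.map_refl]
    · rintro ⟨s, hs, rfl⟩
      exact maxIndep_map e G s hs
  rw [mis, mis, hset, Set.ncard_image_of_injective _ (Finset.map_injective e.toEmbedding)]

end Transport

section Construction

variable (t : ℕ)

def mmr : (Fin 4 ⊕ Fin t × Fin 3) → Option (Fin t)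
  | Sum.inl _ => none
  | Sum.inr (i, _) => some i

def mmKW : SimpleGraph (Fin 4 ⊕ Fin t × Fin 3) where
  Adj a b := a ≠ b ∧ mmr t a = mmr t b
  symm := ⟨by rintro a b ⟨h1, h2⟩; exact ⟨h1.symm, h2.symm⟩⟩
  loopless := ⟨by rintro a ⟨h, -⟩; exact h rfl⟩

def mmΨ (p : Fin 4 × (Fin t → Fin 3)) : Finset (Fin 4 ⊕ Fin t × Fin 3) :=
  insert (Sum.inl p.1) (univ.image (fun i => Sum.inr (i, p.2 i)))

lemma mmΨ_inj : Function.Injective (mmΨ t) := by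
  rintro ⟨a, h⟩ ⟨a', h'⟩ heq
  have h1 : (Sum.inl a : Fin 4 ⊕ Fin t × Fin 3) ∈ mmΨ t (a', h') := by
    rw [← heq]; exact mem_insert_self _ _
  have ha : a = a' := by
    rcases mem_insert.mp h1 with h2 | h2
    · exact Sum.inl.inj h2
    · obtain ⟨i, -, h3⟩ := Finset.mem_image.mp h2
      exact absurd h3 (by simp)
  have hh : h = h' := by
    funext i
    have h2 : (Sum.inr (i, h i) : Fin 4 ⊕ Fin t × Fin 3) ∈ mmΨ t (a', h') := by
      rw [← heq]
      exact mem_insert_of_mem (Finset.mem_image.mpr ⟨i, mem_univ i, rfl⟩)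
    rcases mem_insert.mp h2 with h3 | h3
    · exact absurd h3 (by simp)
    · obtain ⟨j, -, h4⟩ := Finset.mem_image.mp h3
      have h5 : (j, h' j) = (i, h i) := Sum.inr.inj h4
      have h6 : j = i := (Prod.ext_iff.mp h5).1
      subst h6
      exact ((Prod.ext_iff.mp h5).2).symm
  simp [ha, hh]

lemma mmΨ_maxIndep (p : Fin 4 × (Fin t → Fin 3)) : IsMaxIndepFinset (mmKW t) (mmΨ t p) := by
  constructor
  · intro a ha b hb hadj
    obtain ⟨hne, hr⟩ := hadj
    rcases mem_insert.mp ha with rfl | ha' <;> rcases mem_insert.mp hb with rfl | hb'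
    · exact hne rfl
    · obtain ⟨j, -, rfl⟩ := Finset.mem_image.mp hb'
      simp [mmr] at hr
    · obtain ⟨i, -, rfl⟩ := Finset.mem_image.mp ha'
      simp [mmr] at hr
    · obtain ⟨i, -, rfl⟩ := Finset.mem_image.mp ha'
      obtain ⟨j, -, rfl⟩ := Finset.mem_image.mp hb'
      simp only [mmr, Option.some.injEq] at hr
      subst hr
      exact hne rfl
  · intro s hs hsub
    refine Finset.Subset.antisymm hsub ?_
    intro x hx
    rcases x with b | ⟨i, c⟩
    · have hmem : (Sum.inl p.1 : Fin 4 ⊕ Fin t × Fin 3) ∈ s := hsub (mem_insert_self _ _)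
      have hb : b = p.1 := by
        by_contra hne
        exact hs hx hmem ⟨by simp [hne], rfl⟩
      rw [hb]; exact mem_insert_self _ _
    · have hmem : (Sum.inr (i, p.2 i) : Fin 4 ⊕ Fin t × Fin 3) ∈ s :=
        hsub (mem_insert_of_mem (Finset.mem_image.mpr ⟨i, mem_univ i, rfl⟩))
      have hc : c = p.2 i := by
        by_contra hne
        exact hs hx hmem ⟨by simp [hne], rfl⟩
      rw [hc]
      exact mem_insert_of_mem (Finset.mem_image.mpr ⟨i, mem_univ i, rfl⟩)

lemma mmΨ_surj (σ : Finset (Fin 4 ⊕ Fin t × Fin 3)) (hσ : IsMaxIndepFinset (mmKW t) σ) :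
    ∃ p, mmΨ t p = σ := by
  obtain ⟨hind, hmax⟩ := hσ
  have hexists : ∀ c : Option (Fin t), ∃ w ∈ σ, mmr t w = c := by
    intro c
    by_contra hcon
    push_neg at hcon
    set w0 : Fin 4 ⊕ Fin t × Fin 3 := Option.elim c (Sum.inl 0) (fun i => Sum.inr (i, 0)) with hw0
    have hrw0 : mmr t w0 = c := by cases c <;> rfl
    have hw0σ : w0 ∉ σ := fun h => hcon w0 h hrw0
    have hins : IsIndepFinset (mmKW t) (insert w0 σ) := by
      intro a ha b hb hadj
      obtain ⟨hne, hr⟩ := hadj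
      rcases mem_insert.mp ha with rfl | ha' <;> rcases mem_insert.mp hb with rfl | hb'
      · exact hne rfl
      · exact hcon b hb' (hr ▸ hrw0)
      · exact hcon a ha' (hr.symm ▸ hrw0)
      · exact hind ha' hb' ⟨hne, hr⟩
    have := hmax _ hins (subset_insert _ _)
    exact hw0σ (this ▸ mem_insert_self _ _)
  have huniq : ∀ w ∈ σ, ∀ w' ∈ σ, mmr t w = mmr t w' → w = w' := by
    intro w hw w' hw' hr
    by_contra hne
    exact hind hw hw' ⟨hne, hr⟩
  obtain ⟨wn, hwn, hrn⟩ := hexists none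
  obtain ⟨a, rfl⟩ : ∃ a, wn = Sum.inl a := by
    rcases wn with a | ⟨i, c⟩
    · exact ⟨a, rfl⟩
    · simp [mmr] at hrn
  have hchoice : ∀ i : Fin t, ∃ c : Fin 3, Sum.inr (i, c) ∈ σ := by
    intro i
    obtain ⟨w, hw, hrw⟩ := hexists (some i)
    rcases w with b | ⟨j, c⟩
    · simp [mmr] at hrw
    · simp only [mmr, Option.some.injEq] at hrw
      exact ⟨c, hrw ▸ hw⟩
  choose h hh using hchoice
  refine ⟨(a, h), ?_⟩
  apply Finset.Subset.antisymm
  · intro x hx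
    rcases mem_insert.mp hx with rfl | hx'
    · exact hwn
    · obtain ⟨i, -, rfl⟩ := Finset.mem_image.mp hx'
      exact hh i
  · intro x hx
    rcases x with b | ⟨i, c⟩
    · have : Sum.inl b = Sum.inl a := huniq _ hx _ hwn rfl
      rw [this]
      exact mem_insert_self _ _
    · have : Sum.inr (i, c) = Sum.inr (i, h i) := huniq _ hx _ (hh i) rfl
      rw [this]
      exact mem_insert_of_mem (Finset.mem_image.mpr ⟨i, mem_univ i, rfl⟩)

lemma mis_mmKW : mis (mmKW t) = 4 * 3 ^ t := by
  have hset : {s : Finset (Fin 4 ⊕ Fin t × Fin 3) | IsMaxIndepFinset (mmKW t) s} =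
      Set.range (mmΨ t) := by
    ext σ
    constructor
    · intro hσ
      obtain ⟨p, hp⟩ := mmΨ_surj t σ hσ
      exact ⟨p, hp⟩
    · rintro ⟨p, rfl⟩
      exact mmΨ_maxIndep t p
  rw [mis, hset, ← Set.image_univ, Set.ncard_image_of_injective _ (mmΨ_inj t),
    Set.ncard_univ, Nat.card_eq_fintype_card]
  simp [Fintype.card_fun]

end Construction

theorem moon_moser_one_mod_three (n : ℕ) (hn : 4 ≤ n) (hmod : n % 3 = 1) :
    (∀ G : SimpleGraph (Fin n), mis G ≤ 4 * 3 ^ ((n - 4) / 3)) ∧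
    (∃ G : SimpleGraph (Fin n), mis G = 4 * 3 ^ ((n - 4) / 3)) := by
  obtain ⟨t, ht⟩ : ∃ t, n = 4 + 3 * t := ⟨(n - 4) / 3, by omega⟩
  have htt : (n - 4) / 3 = t := by omega
  rw [htt]
  constructor
  · intro G
    have h1 := mis_le_mmg n (Fin n) G (by simp)
    have h2 : mmg n = 4 * 3 ^ t := by rw [ht, mmg_val]
    omega
  · have hc : Fintype.card (Fin n) = Fintype.card (Fin 4 ⊕ Fin t × Fin 3) := by
      simp only [Fintype.card_sum, Fintype.card_prod, Fintype.card_fin]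
      omega
    have e := Fintype.equivOfCardEq hc
    exact ⟨(mmKW t).comap e, by rw [mis_comap e (mmKW t), mis_mmKW]⟩
end

section
/- Let n ≥ 4 be an even integer. Then the maximum of mis(G) over all triangle-free simple graphs G on n vertices equals 2^{n/2}; that is, every triangle-free graph G on n vertices satisfies mis(G) ≤ 2^{n/2}, and some triangle-free graph on n vertices attains this value. -/
section Aux
variable {V : Type} [Finite V]
set_option linter.unusedSectionVars false

instance : Finite (Finset V) := by
  haveI := Fintype.ofFinite V
  infer_instance

/-- every maximal independent set contains v or a neighbor of v -/
lemma mem_or_adj {G : SimpleGraph V} {S : Finset V} (hS : IsMaxIndepFinset G S) (v : V) :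
    v ∈ S ∨ ∃ u ∈ S, G.Adj v u := by
  classical
  by_cases hv : v ∈ S
  · exact Or.inl hv
  · right
    by_contra h
    push_neg at h
    have hind : IsIndepFinset G (insert v S) := by
      intro a ha b hb hab
      rcases Finset.mem_insert.mp ha with rfl | ha' <;>
        rcases Finset.mem_insert.mp hb with rfl | hb'
      · exact G.loopless.irrefl _ hab
      · exact h b hb' hab
      · exact h a ha' hab.symm
      · exact hS.1 ha' hb' hab
    have := hS.2 _ hind (Finset.subset_insert _ _)
    exact hv (this ▸ Finset.mem_insert_self v S)

/-- the key injection lemma -/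
lemma ncard_slice_le (G : SimpleGraph V) (A : Set V) (v : V) (hvA : v ∈ A)
    (hNA : ∀ z, G.Adj v z → z ∈ A) :
    {S : Finset V | IsMaxIndepFinset G S ∧ v ∈ S ∧ ∀ a ∈ A, a ∈ S → a = v}.ncard
      ≤ mis (G.induce Aᶜ) := by
  classical
  haveI := Fintype.ofFinite ↥(Aᶜ : Set V)
  apply Set.ncard_le_ncard_of_injOn (fun S => S.subtype (fun x => x ∈ (Aᶜ : Set V)))
  · rintro S ⟨hS, hvS, hcond⟩
    constructor
    · intro a ha b hb hab
      simp only [Finset.mem_subtype] at ha hb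
      exact hS.1 ha hb hab
    · intro t ht hsub
      refine Finset.Subset.antisymm hsub (fun x hx => ?_)
      simp only [Finset.mem_subtype]
      by_contra hxS
      have hind : IsIndepFinset G (insert (↑x) S) := by
        intro a ha b hb hab
        have key : ∀ c ∈ S, ¬ G.Adj (↑x : V) c := by
          intro c hc hadj
          by_cases hcA : c ∈ A
          · have : c = v := hcond c hcA hc
            subst this
            exact x.2 (hNA _ hadj.symm)
          · have hct : (⟨c, hcA⟩ : ↥(Aᶜ : Set V)) ∈ t := hsub (Finset.mem_subtype.mpr hc)
            exact ht hx hct hadj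
        rcases Finset.mem_insert.mp ha with rfl | ha' <;>
          rcases Finset.mem_insert.mp hb with rfl | hb'
        · exact G.loopless.irrefl _ hab
        · exact key b hb' hab
        · exact key a ha' hab.symm
        · exact hS.1 ha' hb' hab
      have := hS.2 _ hind (Finset.subset_insert _ _)
      exact hxS (this ▸ Finset.mem_insert_self _ S)
  · rintro S ⟨hS, hvS, hcond⟩ S' ⟨hS', hvS', hcond'⟩ heq
    have heq : S.subtype (fun x => x ∈ (Aᶜ : Set V)) = S'.subtype (fun x => x ∈ (Aᶜ : Set V)) := heq
    ext a
    constructor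
    · intro ha
      by_cases haA : a ∈ A
      · exact (hcond a haA ha) ▸ hvS'
      · have : (⟨a, haA⟩ : ↥(Aᶜ : Set V)) ∈ S.subtype _ := Finset.mem_subtype.mpr ha
        rw [heq] at this
        exact Finset.mem_subtype.mp this
    · intro ha
      by_cases haA : a ∈ A
      · exact (hcond' a haA ha) ▸ hvS
      · have : (⟨a, haA⟩ : ↥(Aᶜ : Set V)) ∈ S'.subtype _ := Finset.mem_subtype.mpr ha
        rw [← heq] at this
        exact Finset.mem_subtype.mp this


lemma ncard_D_le (G : SimpleGraph V) (x : V) :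
    {S : Finset V | IsMaxIndepFinset G S ∧ x ∈ S}.ncard
      ≤ mis (G.induce (insert x (G.neighborSet x))ᶜ) := by
  have h2 := ncard_slice_le G (insert x (G.neighborSet x) : Set V) x (Set.mem_insert x (G.neighborSet x))
    (fun z hz => Set.mem_insert_of_mem _ ((G.mem_neighborSet _ _).mpr hz))
  refine le_trans ?_ h2
  refine Set.ncard_le_ncard ?_ (Set.toFinite _)
  · rintro S ⟨hS, hxS⟩
    refine ⟨hS, hxS, ?_⟩
    rintro a (rfl | ha) haS
    · rfl
    · exact absurd ha (hS.1 hxS haS)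

lemma ncard_D3_le (G : SimpleGraph V) {u w : V} (hu : ¬ G.Adj w u) :
    {S : Finset V | IsMaxIndepFinset G S ∧ w ∈ S ∧ u ∉ S}.ncard
      ≤ mis (G.induce (insert u (insert w (G.neighborSet w)))ᶜ) := by
  have h2 := ncard_slice_le G (insert u (insert w (G.neighborSet w)) : Set V) w
    (Set.mem_insert_of_mem u (Set.mem_insert w (G.neighborSet w)))
    (fun z hz => Set.mem_insert_of_mem u (Set.mem_insert_of_mem w ((G.mem_neighborSet _ _).mpr hz)))
  refine le_trans ?_ h2
  refine Set.ncard_le_ncard ?_ (Set.toFinite _)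
  · rintro S ⟨hS, hwS, huS⟩
    refine ⟨hS, hwS, ?_⟩
    rintro a (rfl | rfl | ha) haS
    · exact absurd haS huS
    · rfl
    · exact absurd ha (hS.1 hwS haS)

lemma ncard_biUnion_le {α β : Type*} [Finite β] (s : Finset α) (f : α → Set β) :
    (⋃ a ∈ s, f a).ncard ≤ ∑ a ∈ s, (f a).ncard := by
  classical
  induction s using Finset.induction_on with
  | empty => simp
  | @insert a s h ih =>
    rw [Finset.sum_insert h, Finset.set_biUnion_insert]
    exact le_trans (Set.ncard_union_le _ _) (Nat.add_le_add_left ih _)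

lemma sq_le_two_pow : ∀ k : ℕ, k ≠ 3 → k^2 ≤ 2^k := by
  have h4 : ∀ m : ℕ, (m+4)^2 ≤ 2^(m+4) := by
    intro m
    induction m with
    | zero => norm_num
    | succ p ih =>
      have h2 : (2:ℕ)^(p+1+4) = 2 * 2^(p+4) := by ring
      rw [h2]
      have h3 : (p+1+4)^2 ≤ 2*(p+4)^2 := by nlinarith [sq_nonneg p, Nat.zero_le p]
      exact le_trans h3 (Nat.mul_le_mul_left 2 ih)
  intro k hk
  match k, hk with
  | 0, _ => norm_num
  | 1, _ => norm_num
  | 2, _ => norm_num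
  | 3, hk => exact absurd rfl hk
  | (m+4), _ => exact h4 m

lemma tf_sq_le : ∀ (n : ℕ) (V : Type) [Finite V] (G : SimpleGraph V),
    G.CliqueFree 3 → Nat.card V = n → (mis G)^2 ≤ 2^n := by
  intro n
  induction n using Nat.strong_induction_on with
  | _ n IH =>
  intro V _ G hG hcard
  classical
  -- bound coming from the inductive hypothesis applied to induced subgraphs
  have key : ∀ A : Set V, A.Nonempty → (mis (G.induce Aᶜ))^2 * 2^(A.ncard) ≤ 2^n := by
    intro A hA
    have h1 : A.ncard + (Aᶜ : Set V).ncard = n := by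
      rw [Set.ncard_add_ncard_compl]; exact hcard
    have hA1 : 1 ≤ A.ncard := (Set.ncard_pos (Set.toFinite _)).mpr hA
    have h2 : (Aᶜ : Set V).ncard < n := by omega
    have h3 : (mis (G.induce Aᶜ))^2 ≤ 2^((Aᶜ : Set V).ncard) := by
      refine IH _ h2 _ (G.induce Aᶜ) (hG.comap (SimpleGraph.Embedding.induce Aᶜ).isContained) ?_
      exact Nat.card_coe_set_eq _
    calc (mis (G.induce Aᶜ))^2 * 2^A.ncard
        ≤ 2^((Aᶜ : Set V).ncard) * 2^A.ncard := Nat.mul_le_mul_right _ h3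
      _ = 2^n := by rw [← pow_add]; congr 1; omega
  by_cases hV : Nonempty V
  case neg =>
    have h0 : mis G ≤ 1 := by
      have hsub : {s : Finset V | IsMaxIndepFinset G s} ⊆ {(∅ : Finset V)} := by
        intro s _
        simp only [Set.mem_singleton_iff]
        ext a
        exact absurd ⟨a⟩ hV
      calc mis G ≤ ({(∅ : Finset V)} : Set (Finset V)).ncard :=
            Set.ncard_le_ncard hsub (Set.toFinite _)
        _ = 1 := Set.ncard_singleton _
    calc (mis G)^2 ≤ 1^2 := Nat.pow_le_pow_left h0 2
      _ ≤ 2^n := by simpa using Nat.one_le_two_pow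
  case pos =>
  haveI := hV
  obtain ⟨v, hv⟩ := Finite.exists_min (fun x : V => (G.neighborSet x).ncard)
  set δ := (G.neighborSet v).ncard with hδdef
  set D : V → Set (Finset V) := fun x => {S | IsMaxIndepFinset G S ∧ x ∈ S} with hD
  have hA_ncard : ∀ x : V, (insert x (G.neighborSet x) : Set V).ncard
      = (G.neighborSet x).ncard + 1 := by
    intro x
    rw [Set.ncard_insert_of_notMem (by simp) (Set.toFinite _)]
  have hDle : ∀ x : V, (D x).ncard ^ 2 * 2^(δ+1) ≤ 2^n := by
    intro x
    have h1 := ncard_D_le G x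
    have h2 := key (insert x (G.neighborSet x)) ⟨x, Set.mem_insert _ _⟩
    rw [hA_ncard x] at h2
    have h3 : (2:ℕ)^(δ+1) ≤ 2^((G.neighborSet x).ncard + 1) :=
      Nat.pow_le_pow_right (by norm_num) (by have := hv x; omega)
    calc (D x).ncard^2 * 2^(δ+1)
        ≤ (mis (G.induce (insert x (G.neighborSet x) : Set V)ᶜ))^2
            * 2^((G.neighborSet x).ncard+1) :=
          Nat.mul_le_mul (Nat.pow_le_pow_left h1 2) h3
      _ ≤ 2^n := h2
  set nf : Finset V := (Set.toFinite (G.neighborSet v)).toFinset with hnf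
  have hnfmem : ∀ x, x ∈ nf ↔ G.Adj v x := by
    intro x
    rw [hnf, Set.Finite.mem_toFinset]
    exact G.mem_neighborSet v x
  have hnfcard : nf.card = δ := by
    rw [hδdef, Set.ncard_eq_toFinset_card (G.neighborSet v) (Set.toFinite _)]
  have hvnf : v ∉ nf := by
    rw [hnfmem]
    exact G.loopless.irrefl v
  have hcover : {S : Finset V | IsMaxIndepFinset G S} ⊆ ⋃ x ∈ (insert v nf : Finset V), D x := by
    intro S hS
    rcases mem_or_adj hS v with h | ⟨u, huS, hadj⟩
    · exact Set.mem_biUnion (Finset.mem_insert_self _ _) ⟨hS, h⟩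
    · exact Set.mem_biUnion (Finset.mem_insert_of_mem ((hnfmem u).mpr hadj)) ⟨hS, huS⟩
  have hmis : mis G ≤ ∑ x ∈ insert v nf, (D x).ncard :=
    le_trans (Set.ncard_le_ncard hcover (Set.toFinite _)) (ncard_biUnion_le _ _)
  have hcard_ins : (insert v nf).card = δ + 1 := by
    rw [Finset.card_insert_of_notMem hvnf, hnfcard]
  have hpos : 0 < 2^(δ+1) := Nat.pow_pos (by norm_num)
  by_cases hδ2 : δ = 2
  case neg =>
    -- generic case via Cauchy-Schwarz
    have hsq : (δ+1)^2 ≤ 2^(δ+1) := sq_le_two_pow (δ+1) (by omega)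
    have c1 : (∑ x ∈ insert v nf, (D x).ncard)^2
        ≤ (δ+1) * ∑ x ∈ insert v nf, (D x).ncard^2 := by
      have := sq_sum_le_card_mul_sum_sq (s := (insert v nf : Finset V))
        (f := fun x => ((D x).ncard : ℕ))
      rwa [hcard_ins] at this
    have c2 : (∑ x ∈ insert v nf, (D x).ncard^2) * 2^(δ+1) ≤ (δ+1) * 2^n := by
      rw [Finset.sum_mul]
      calc ∑ x ∈ insert v nf, (D x).ncard^2 * 2^(δ+1)
          ≤ ∑ _x ∈ insert v nf, 2^n := Finset.sum_le_sum (fun x _ => hDle x)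
        _ = (δ+1) * 2^n := by rw [Finset.sum_const, hcard_ins, smul_eq_mul]
    have main : (mis G)^2 * 2^(δ+1) ≤ 2^(δ+1) * 2^n := by
      calc (mis G)^2 * 2^(δ+1)
          ≤ (∑ x ∈ insert v nf, (D x).ncard)^2 * 2^(δ+1) :=
            Nat.mul_le_mul_right _ (Nat.pow_le_pow_left hmis 2)
        _ ≤ ((δ+1) * ∑ x ∈ insert v nf, (D x).ncard^2) * 2^(δ+1) :=
            Nat.mul_le_mul_right _ c1
        _ = (δ+1) * ((∑ x ∈ insert v nf, (D x).ncard^2) * 2^(δ+1)) := by ring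
        _ ≤ (δ+1) * ((δ+1) * 2^n) := Nat.mul_le_mul_left _ c2
        _ = (δ+1)^2 * 2^n := by ring
        _ ≤ 2^(δ+1) * 2^n := Nat.mul_le_mul_right _ hsq
    have main' : 2^(δ+1) * (mis G)^2 ≤ 2^(δ+1) * 2^n := by
      calc 2^(δ+1) * (mis G)^2 = (mis G)^2 * 2^(δ+1) := Nat.mul_comm _ _
        _ ≤ 2^(δ+1) * 2^n := main
    exact Nat.le_of_mul_le_mul_left main' hpos
  case pos =>
    -- minimum degree two
    have hs2 : (G.neighborSet v).ncard = 2 := by rw [← hδdef]; exact hδ2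
    obtain ⟨u, w, huw, hset⟩ := Set.ncard_eq_two.mp hs2
    have hvu : G.Adj v u := by
      have : u ∈ G.neighborSet v := by rw [hset]; exact Set.mem_insert _ _
      exact this
    have hvw : G.Adj v w := by
      have : w ∈ G.neighborSet v := by rw [hset]; exact Set.mem_insert_of_mem _ rfl
      exact this
    have hadj_uw : ¬ G.Adj u w := by
      intro h
      exact hG _ (SimpleGraph.is3Clique_triple_iff.mpr ⟨hvu, hvw, h⟩)
    -- the three pieces
    set t1 := (D v).ncard with ht1
    set t2 := (D u).ncard with ht2
    set t3 := ({S : Finset V | IsMaxIndepFinset G S ∧ w ∈ S ∧ u ∉ S}).ncard with ht3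
    have b1 : t1^2 * 2^3 ≤ 2^n := by
      have := hDle v; rw [hδ2] at this; exact this
    have b2 : t2^2 * 2^3 ≤ 2^n := by
      have := hDle u; rw [hδ2] at this; exact this
    have b3 : t3^2 * 2^4 ≤ 2^n := by
      have h1 := ncard_D3_le G (fun h => hadj_uw h.symm)
      have hnm : u ∉ (insert w (G.neighborSet w) : Set V) := by
        rintro (rfl | hu)
        · exact huw rfl
        · exact hadj_uw ((G.mem_neighborSet w u).mp hu).symm
      have h2 := key (insert u (insert w (G.neighborSet w))) ⟨u, Set.mem_insert _ _⟩
      have hcard3 : (insert u (insert w (G.neighborSet w)) : Set V).ncard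
          = (G.neighborSet w).ncard + 2 := by
        rw [Set.ncard_insert_of_notMem hnm (Set.toFinite _), hA_ncard w]
      rw [hcard3] at h2
      have h3 : (2:ℕ)^4 ≤ 2^((G.neighborSet w).ncard + 2) :=
        Nat.pow_le_pow_right (by norm_num) (by have := hv w; omega)
      calc t3^2 * 2^4
          ≤ (mis (G.induce (insert u (insert w (G.neighborSet w)) : Set V)ᶜ))^2
              * 2^((G.neighborSet w).ncard + 2) :=
            Nat.mul_le_mul (Nat.pow_le_pow_left h1 2) h3
        _ ≤ 2^n := h2
    -- covering
    have hcover3 : {S : Finset V | IsMaxIndepFinset G S}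
        ⊆ D v ∪ (D u ∪ {S : Finset V | IsMaxIndepFinset G S ∧ w ∈ S ∧ u ∉ S}) := by
      intro S hS
      rcases mem_or_adj hS v with h | ⟨x, hxS, hadj⟩
      · exact Or.inl ⟨hS, h⟩
      · have hx : x ∈ ({u, w} : Set V) := by rw [← hset]; exact hadj
        by_cases huS : u ∈ S
        · exact Or.inr (Or.inl ⟨hS, huS⟩)
        · rcases hx with rfl | rfl
          · exact absurd hxS huS
          · exact Or.inr (Or.inr ⟨hS, hxS, huS⟩)
    have hmis3 : mis G ≤ t1 + (t2 + t3) := by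
      refine le_trans (Set.ncard_le_ncard hcover3 (Set.toFinite _)) ?_
      refine le_trans (Set.ncard_union_le _ _) ?_
      exact Nat.add_le_add_left (Set.ncard_union_le _ _) _
    -- arithmetic
    have hZ : (12:ℤ) * ((t1:ℤ)+t2+t3)^2 ≤ 32*(t1:ℤ)^2+32*(t2:ℤ)^2+48*(t3:ℤ)^2 := by
      nlinarith [sq_nonneg ((t1:ℤ)-t2), sq_nonneg (2*(t1:ℤ)-3*t3), sq_nonneg (2*(t2:ℤ)-3*t3)]
    have hN : 12 * (t1+t2+t3)^2 ≤ 32*t1^2+32*t2^2+48*t3^2 := by exact_mod_cast hZ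
    have hfin : 12 * (mis G)^2 ≤ 12 * 2^n := by
      calc 12 * (mis G)^2 ≤ 12 * (t1+(t2+t3))^2 :=
            Nat.mul_le_mul_left _ (Nat.pow_le_pow_left hmis3 2)
        _ = 12 * (t1+t2+t3)^2 := by ring
        _ ≤ 32*t1^2+32*t2^2+48*t3^2 := hN
        _ = 4*(t1^2*2^3) + 4*(t2^2*2^3) + 3*(t3^2*2^4) := by ring
        _ ≤ 4*2^n + 4*2^n + 3*2^n :=
            Nat.add_le_add (Nat.add_le_add (Nat.mul_le_mul_left _ b1)
              (Nat.mul_le_mul_left _ b2)) (Nat.mul_le_mul_left _ b3)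
        _ ≤ 12 * 2^n := by ring_nf; omega
    exact Nat.le_of_mul_le_mul_left hfin (by norm_num)

end Aux

/-- the perfect matching graph on `Fin n`: `i ~ j` iff they differ and lie in the same pair. -/
def pairGraph (n : ℕ) : SimpleGraph (Fin n) where
  Adj i j := i ≠ j ∧ i.val / 2 = j.val / 2
  symm := by
    refine ⟨?_⟩
    rintro i j ⟨h1, h2⟩
    exact ⟨h1.symm, h2.symm⟩
  loopless := by
    refine ⟨?_⟩
    rintro i ⟨h1, _⟩
    exact h1 rfl

lemma pairGraph_cliqueFree (n : ℕ) : (pairGraph n).CliqueFree 3 := by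
  intro t ht
  obtain ⟨a, b, c, hab, hac, hbc, rfl⟩ := Finset.card_eq_three.mp ht.2
  have h1 : (pairGraph n).Adj a b := ht.1 (by simp) (by simp) hab
  have h2 : (pairGraph n).Adj b c := ht.1 (by simp) (by simp) hbc
  have hav : a.val ≠ b.val := fun h => hab (Fin.ext h)
  have hbv : b.val ≠ c.val := fun h => hbc (Fin.ext h)
  have hcv : a.val ≠ c.val := fun h => hac (Fin.ext h)
  have e1 : a.val / 2 = b.val / 2 := h1.2
  have e2 : b.val / 2 = c.val / 2 := h2.2
  omega

lemma pairGraph_mis (n : ℕ) (m : ℕ) (hm : n = 2 * m) : mis (pairGraph n) = 2 ^ m := by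
  classical
  -- the vertex in pair `k` selected by the boolean `b`
  have hlt : ∀ (k : Fin m) (b : Bool), 2 * k.val + (if b then 1 else 0) < n := by
    rintro ⟨k, hk⟩ b
    cases b <;> simp <;> omega
  set vtx : Fin m → Bool → Fin n := fun k b => ⟨2 * k.val + (if b then 1 else 0), hlt k b⟩
    with hvtx
  have vtx_div : ∀ (k : Fin m) (b : Bool), (vtx k b).val / 2 = k.val := by
    rintro k b
    rcases b <;> simp [hvtx] <;> omega
  set F : (Fin m → Bool) → Finset (Fin n) :=
    fun g => Finset.univ.image (fun k => vtx k (g k)) with hF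
  have memF : ∀ (g : Fin m → Bool) (x : Fin n), x ∈ F g ↔ ∃ k, vtx k (g k) = x := by
    intro g x
    simp [hF]
  have hFmax : ∀ g, IsMaxIndepFinset (pairGraph n) (F g) := by
    intro g
    constructor
    · intro a ha b hb hab
      obtain ⟨k, hk⟩ := (memF g a).mp ha
      obtain ⟨l, hl⟩ := (memF g b).mp hb
      have h1 : a.val / 2 = k.val := hk ▸ vtx_div k (g k)
      have h2 : b.val / 2 = l.val := hl ▸ vtx_div l (g l)
      have hkl : k = l := by
        have := hab.2
        apply Fin.ext
        omega
      exact hab.1 (by rw [← hk, ← hl, hkl])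
    · intro t ht hsub
      refine Finset.Subset.antisymm hsub (fun x hx => ?_)
      have hxk : x.val / 2 < m := by
        have := x.isLt
        omega
      set k : Fin m := ⟨x.val / 2, hxk⟩ with hkdef
      have hyt : vtx k (g k) ∈ t := hsub ((memF g _).mpr ⟨k, rfl⟩)
      by_cases hxy : vtx k (g k) = x
      · rw [← hxy]
        exact (memF g _).mpr ⟨k, rfl⟩
      · exfalso
        refine ht hx hyt ⟨fun h => hxy h.symm, ?_⟩
        rw [vtx_div k (g k)]
  have hFinj : Function.Injective F := by
    intro g g' hgg
    funext k
    have h1 : vtx k (g k) ∈ F g' := by rw [← hgg]; exact (memF g _).mpr ⟨k, rfl⟩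
    obtain ⟨l, hl⟩ := (memF g' _).mp h1
    have hdiv : l.val = k.val := by
      have := vtx_div l (g' l)
      rw [hl] at this
      rw [vtx_div k (g k)] at this
      exact this.symm
    have hlk : l = k := Fin.ext hdiv
    subst hlk
    have hvals : (vtx l (g' l)).val = (vtx l (g l)).val := by rw [hl]
    simp only [hvtx] at hvals
    rcases hb : g' l <;> rcases hb' : g l <;> rw [hb, hb'] at hvals <;> simp at hvals <;>
      simp [hb, hb']
  have hFsurj : ∀ S : Finset (Fin n), IsMaxIndepFinset (pairGraph n) S → ∃ g, F g = S := by
    intro S hS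
    -- in every pair exactly one vertex of S
    have hone : ∀ k : Fin m, (vtx k true ∈ S ∧ vtx k false ∉ S) ∨
        (vtx k false ∈ S ∧ vtx k true ∉ S) := by
      intro k
      have hne : vtx k true ≠ vtx k false := by
        intro h
        have := congrArg Fin.val h
        simp [hvtx] at this
      have hnotboth : ¬ (vtx k true ∈ S ∧ vtx k false ∈ S) := by
        rintro ⟨h1, h2⟩
        exact hS.1 h1 h2 ⟨hne, by rw [vtx_div, vtx_div]⟩
      have hatleast : vtx k true ∈ S ∨ vtx k false ∈ S := by
        by_contra h
        push_neg at h
        obtain ⟨h1, h2⟩ := h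
        have hind : IsIndepFinset (pairGraph n) (insert (vtx k false) S) := by
          intro a ha b hb hab
          have key : ∀ c ∈ S, ¬ (pairGraph n).Adj (vtx k false) c := by
            intro c hc hadj
            have hc2 : c.val / 2 = k.val := by
              have := hadj.2
              rw [vtx_div] at this
              omega
            have : c = vtx k true ∨ c = vtx k false := by
              have h3 := vtx_div k true
              have h4 := vtx_div k false
              simp only [hvtx] at h3 h4 ⊢
              rcases Nat.lt_or_ge c.val (2 * k.val + 1) with h | h
              · right; apply Fin.ext; simp; omega
              · left; apply Fin.ext; simp; omega
            rcases this with rfl | rfl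
            · exact h1 hc
            · exact h2 hc
          rcases Finset.mem_insert.mp ha with rfl | ha' <;>
            rcases Finset.mem_insert.mp hb with rfl | hb'
          · exact (pairGraph n).loopless.irrefl _ hab
          · exact key b hb' hab
          · exact key a ha' hab.symm
          · exact hS.1 ha' hb' hab
        have := hS.2 _ hind (Finset.subset_insert _ _)
        exact h2 (this ▸ Finset.mem_insert_self _ S)
      rcases hatleast with h | h
      · left
        exact ⟨h, fun h' => hnotboth ⟨h, h'⟩⟩
      · right
        exact ⟨h, fun h' => hnotboth ⟨h', h⟩⟩
    refine ⟨fun k => if vtx k true ∈ S then true else false, ?_⟩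
    apply Finset.Subset.antisymm
    · intro x hx
      obtain ⟨k, hk⟩ := (memF _ x).mp hx
      by_cases h : vtx k true ∈ S
      · rw [← hk]
        simp only [if_pos h]
        exact h
      · rw [← hk]
        simp only [if_neg h]
        rcases hone k with ⟨h1, _⟩ | ⟨h2, _⟩
        · exact absurd h1 h
        · exact h2
    · intro x hx
      have hxk : x.val / 2 < m := by have := x.isLt; omega
      set k : Fin m := ⟨x.val / 2, hxk⟩ with hkdef
      have hxcase : x = vtx k true ∨ x = vtx k false := by
        simp only [hvtx]
        rcases Nat.lt_or_ge x.val (2 * (x.val / 2) + 1) with h | h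
        · right; apply Fin.ext; simp [hkdef]; omega
        · left; apply Fin.ext; simp [hkdef]; omega
      rcases hxcase with h | h
      · have hx' : vtx k true ∈ S := h ▸ hx
        have hg : (if vtx k true ∈ S then true else false) = true := if_pos hx'
        refine (memF _ _).mpr ⟨k, ?_⟩
        rw [hg]
        exact h.symm
      · have hx' : vtx k false ∈ S := h ▸ hx
        have hnt : vtx k true ∉ S := by
          rcases hone k with ⟨_, h2⟩ | ⟨_, h2⟩
          · exact absurd hx' h2
          · exact h2
        have hg : (if vtx k true ∈ S then true else false) = false := if_neg hnt
        refine (memF _ _).mpr ⟨k, ?_⟩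
        rw [hg]
        exact h.symm
  -- conclude by counting
  have hbij : {s : Finset (Fin n) | IsMaxIndepFinset (pairGraph n) s} = Set.range F := by
    ext S
    constructor
    · intro hS
      obtain ⟨g, hg⟩ := hFsurj S hS
      exact ⟨g, hg⟩
    · rintro ⟨g, rfl⟩
      exact hFmax g
  rw [mis, hbij, ← Nat.card_coe_set_eq, Nat.card_range_of_injective hFinj,
    Nat.card_eq_fintype_card]
  simp

theorem hujter_tuza_even (n : ℕ) (hn : 4 ≤ n) (heven : Even n) :
    (∀ G : SimpleGraph (Fin n), G.CliqueFree 3 → mis G ≤ 2 ^ (n / 2)) ∧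
    (∃ G : SimpleGraph (Fin n), G.CliqueFree 3 ∧ mis G = 2 ^ (n / 2)) := by
  obtain ⟨m, hm⟩ := heven
  have hm2 : n = 2 * m := by omega
  have hdiv : n / 2 = m := by omega
  constructor
  · intro G hG
    have h := tf_sq_le n (Fin n) G hG (by simp)
    have hpow : (2:ℕ)^n = (2^(n/2))^2 := by
      rw [← pow_mul]
      congr 1
      omega
    rw [hpow] at h
    exact (Nat.pow_le_pow_iff_left (two_ne_zero)).mp h
  · exact ⟨pairGraph n, pairGraph_cliqueFree n, by rw [pairGraph_mis n m hm2, hdiv]⟩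
end

section
/- Let n ≥ 5 be an odd integer. Then the maximum of mis(G) over all triangle-free simple graphs G on n vertices equals 5 · 2^{(n−5)/2}; that is, every triangle-free graph G on n vertices satisfies mis(G) ≤ 5 · 2^{(n−5)/2}, and some triangle-free graph on n vertices attains this value. -/
namespace HT


def f (n : ℕ) : ℕ := if n % 2 = 0 then 2 ^ (n / 2) else if n < 5 then 2 ^ (n / 2) else 5 * 2 ^ ((n - 5) / 2)

lemma f_even (k : ℕ) : f (2 * k) = 2 ^ k := by simp [f, Nat.mul_div_cancel_left]

lemma f_odd5 (k : ℕ) : f (2 * k + 5) = 5 * 2 ^ k := by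
  have h1 : (2 * k + 5) % 2 = 1 := by omega
  have h2 : (2 * k + 5 - 5) / 2 = k := by omega
  simp [f, h1, h2]

lemma f_one : f 1 = 1 := by decide
lemma f_three : f 3 = 2 := by decide
lemma f_zero : f 0 = 1 := by decide

lemma f_succ_le (n : ℕ) : f n ≤ f (n + 1) := by
  rcases Nat.even_or_odd n with ⟨k, hk⟩ | ⟨k, hk⟩
  · subst_vars
    rw [show k + k = 2 * k by ring, f_even]
    rcases Nat.lt_or_ge k 2 with h | h
    · interval_cases k <;> decide
    · obtain ⟨j, rfl⟩ : ∃ j, k = j + 2 := ⟨k - 2, by omega⟩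
      rw [show 2 * (j + 2) + 1 = 2 * j + 5 by ring, f_odd5]
      rw [pow_add]; nlinarith [Nat.one_le_two_pow (n := j)]
  · subst_vars
    rw [show 2 * k + 1 + 1 = 2 * (k + 1) by ring, f_even]
    rcases Nat.lt_or_ge k 2 with h | h
    · interval_cases k <;> decide
    · obtain ⟨j, rfl⟩ : ∃ j, k = j + 2 := ⟨k - 2, by omega⟩
      rw [show 2 * (j + 2) + 1 = 2 * j + 5 by ring, f_odd5]
      rw [show j + 2 + 1 = j + 3 by ring, pow_add]
      nlinarith [Nat.one_le_two_pow (n := j)]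

lemma f_mono : Monotone f := monotone_nat_of_le_succ f_succ_le

lemma N2 (m : ℕ) : 2 * f m ≤ f (m + 2) := by
  rcases Nat.even_or_odd m with ⟨k, hk⟩ | ⟨k, hk⟩
  · subst_vars
    rw [show k + k = 2 * k by ring, show 2 * k + 2 = 2 * (k + 1) by ring, f_even, f_even, pow_succ]
    omega
  · subst_vars
    rcases Nat.lt_or_ge k 2 with h | h
    · interval_cases k <;> decide
    · obtain ⟨j, rfl⟩ : ∃ j, k = j + 2 := ⟨k - 2, by omega⟩
      rw [show 2 * (j + 2) + 1 = 2 * j + 5 by ring, show 2 * j + 5 + 2 = 2 * (j + 1) + 5 by ring,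
        f_odd5, f_odd5, pow_succ]
      omega



lemma f_le_mono {a b : ℕ} (h : a ≤ b) : f a ≤ f b := f_mono h

lemma N4_base4 (m : ℕ) : 4 * f m ≤ f (m + 4) := by
  rcases Nat.even_or_odd m with ⟨k, hk⟩ | ⟨k, hk⟩
  · subst_vars
    rw [show k + k = 2 * k by ring, show 2 * k + 4 = 2 * (k + 2) by ring, f_even, f_even]
    simp only [pow_add]; omega
  · subst_vars
    rcases Nat.lt_or_ge k 2 with h | h
    · interval_cases k <;> decide
    · obtain ⟨j, rfl⟩ : ∃ j, k = j + 2 := ⟨k - 2, by omega⟩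
      rw [show 2 * (j + 2) + 1 = 2 * j + 5 by ring, show 2 * j + 5 + 4 = 2 * (j + 2) + 5 by ring,
        f_odd5, f_odd5]; simp only [pow_add]; ring_nf; omega

lemma N4_base5 (m : ℕ) : 5 * f m ≤ f (m + 5) := by
  rcases Nat.even_or_odd m with ⟨k, hk⟩ | ⟨k, hk⟩
  · subst_vars
    rw [show k + k = 2 * k by ring, show 2 * k + 5 = 2 * k + 5 by rfl, f_even, f_odd5]
  · subst_vars
    rcases Nat.lt_or_ge k 2 with h | h
    · interval_cases k <;> decide
    · obtain ⟨j, rfl⟩ : ∃ j, k = j + 2 := ⟨k - 2, by omega⟩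
      rw [show 2 * (j + 2) + 1 = 2 * j + 5 by ring, show 2 * j + 5 + 5 = 2 * (j + 5) by ring,
        f_odd5, f_even, show j + 5 = j + 5 by rfl, pow_add]
      nlinarith [Nat.one_le_two_pow (n := j)]

lemma N4 : ∀ k, 4 ≤ k → ∀ m, k * f m ≤ f (m + k) := by
  intro k
  induction k using Nat.strong_induction_on with
  | _ k ih =>
    intro hk m
    rcases Nat.lt_or_ge k 6 with h | h
    · interval_cases k
    
      · exact N4_base4 m
      · exact N4_base5 m
    · obtain ⟨j, rfl⟩ : ∃ j, k = j + 2 := ⟨k - 2, by omega⟩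
      have h1 : (j + 2) * f m ≤ (2 * j) * f m := Nat.mul_le_mul_right _ (by omega)
      have h2 := ih j (by omega) (by omega) m
      have h3 := N2 (m + j)
      have h4 : f (m + j + 2) = f (m + (j + 2)) := by ring_nf
      have h5 : (2 * j) * f m = 2 * (j * f m) := by ring
      omega

lemma N6 (k m : ℕ) (hk : 3 ≤ k) : k * f m ≤ f (m + k + 1) := by
  rcases Nat.lt_or_ge k 4 with h | h
  · have hk3 : k = 3 := by omega
    subst hk3
    calc 3 * f m ≤ 4 * f m := by omega
    _ ≤ f (m + 4) := N4_base4 m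
  · calc k * f m ≤ f (m + k) := N4 k h m
    _ ≤ f (m + k + 1) := f_succ_le _

lemma N5a (m : ℕ) : 2 * f (m + 2) + f m ≤ f (m + 5) := by
  rcases Nat.even_or_odd m with ⟨k, hk⟩ | ⟨k, hk⟩
  · subst_vars
    rw [show k + k = 2 * k by ring, show 2 * k + 2 = 2 * (k + 1) by ring, f_even, f_even, f_odd5]
    rw [pow_succ]; omega
  · subst_vars
    rcases Nat.lt_or_ge k 2 with h | h
    · interval_cases k <;> decide
    · obtain ⟨j, rfl⟩ : ∃ j, k = j + 2 := ⟨k - 2, by omega⟩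
      rw [show 2 * (j + 2) + 1 = 2 * j + 5 by ring, show 2 * j + 5 + 2 = 2 * (j + 1) + 5 by ring,
        show 2 * j + 5 + 5 = 2 * (j + 5) by ring, f_odd5, f_odd5, f_even]
      simp only [pow_add]
      nlinarith [Nat.one_le_two_pow (n := j)]

lemma N5b (m : ℕ) : f (m + 3) + f (m + 2) + 2 * f m ≤ f (m + 6) := by
  rcases Nat.even_or_odd m with ⟨k, hk⟩ | ⟨k, hk⟩
  · subst_vars
    rw [show k + k = 2 * k by ring]
    rcases Nat.lt_or_ge k 2 with h | h
    · interval_cases k <;> decide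
    · obtain ⟨j, rfl⟩ : ∃ j, k = j + 2 := ⟨k - 2, by omega⟩
      rw [show 2 * (j + 2) + 3 = 2 * (j + 1) + 5 by ring, show 2 * (j + 2) + 2 = 2 * (j + 3) by ring,
        show 2 * (j + 2) + 6 = 2 * (j + 5) by ring, f_odd5, f_even, f_even, f_even]
      simp only [pow_add]
      nlinarith [Nat.one_le_two_pow (n := j)]
  · subst_vars
    rcases Nat.lt_or_ge k 2 with h | h
    · interval_cases k <;> decide
    · obtain ⟨j, rfl⟩ : ∃ j, k = j + 2 := ⟨k - 2, by omega⟩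
      rw [show 2 * (j + 2) + 1 = 2 * j + 5 by ring, show 2 * j + 5 + 3 = 2 * (j + 4) by ring,
        show 2 * j + 5 + 2 = 2 * (j + 1) + 5 by ring, show 2 * j + 5 + 6 = 2 * (j + 3) + 5 by ring,
        f_even, f_odd5, f_odd5, f_odd5]
      simp only [pow_add]
      nlinarith [Nat.one_le_two_pow (n := j)]


open Finset

variable {V : Type*} [Fintype V] [DecidableEq V]

lemma indep_subset {G : SimpleGraph V} {s t : Finset V} (h : IsIndepFinset G t) (hst : s ⊆ t) :
    IsIndepFinset G s := fun a ha b hb => h (hst ha) (hst hb)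

/-- Maximal independent sets inside a window `W`. -/
def MaxIn (G : SimpleGraph V) (W s : Finset V) : Prop :=
  s ⊆ W ∧ IsIndepFinset G s ∧ ∀ w ∈ W, w ∉ s → ∃ y ∈ s, G.Adj w y

open Classical in
noncomputable def misF (G : SimpleGraph V) (W : Finset V) : Finset (Finset V) :=
  univ.filter (MaxIn G W)

noncomputable def misIn (G : SimpleGraph V) (W : Finset V) : ℕ := (misF G W).card

lemma mem_misF {G : SimpleGraph V} {W s : Finset V} : s ∈ misF G W ↔ MaxIn G W s := by
  classical
  simp [misF]

/-- Dominating characterization agrees with maximality. -/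
lemma maxIn_max {G : SimpleGraph V} {W s : Finset V} (h : MaxIn G W s) :
    ∀ t : Finset V, t ⊆ W → IsIndepFinset G t → s ⊆ t → s = t := by
  obtain ⟨hsW, hind, hdom⟩ := h
  intro t htW htind hst
  refine Finset.Subset.antisymm hst fun x hx => ?_
  by_contra hxs
  obtain ⟨y, hy, hadj⟩ := hdom x (htW hx) hxs
  exact htind hx (hst hy) hadj

lemma maxIn_of_max {G : SimpleGraph V} {W s : Finset V} (hsW : s ⊆ W)
    (hind : IsIndepFinset G s)
    (hmax : ∀ t : Finset V, t ⊆ W → IsIndepFinset G t → s ⊆ t → s = t) :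
    MaxIn G W s := by
  refine ⟨hsW, hind, fun w hwW hws => ?_⟩
  by_contra hno
  push_neg at hno
  have hind' : IsIndepFinset G (insert w s) := by
    intro a ha b hb hadj
    rcases Finset.mem_insert.mp ha with ha' | ha' <;> rcases Finset.mem_insert.mp hb with hb' | hb'
    · subst ha'; subst hb'; exact G.loopless.irrefl _ hadj
    · subst ha'; exact hno b hb' hadj
    · subst hb'; exact hno a ha' hadj.symm
    · exact hind ha' hb' hadj
  have := hmax (insert w s) (Finset.insert_subset hwW hsW) hind' (Finset.subset_insert _ _)
  exact hws (this ▸ Finset.mem_insert_self w s)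

lemma maxIn_univ_iff {G : SimpleGraph V} {s : Finset V} :
    MaxIn G univ s ↔ IsMaxIndepFinset G s := by
  constructor
  · intro h
    exact ⟨h.2.1, fun t ht hst => maxIn_max h t (subset_univ t) ht hst⟩
  · intro ⟨hind, hmax⟩
    exact maxIn_of_max (subset_univ s) hind fun t _ ht hst => hmax t ht hst

lemma mis_eq_misIn (G : SimpleGraph V) : mis G = misIn G univ := by
  classical
  have : {s : Finset V | IsMaxIndepFinset G s} = ↑(misF G univ) := by
    ext s; simp [mem_misF, maxIn_univ_iff]
  rw [mis, this, Set.ncard_coe_finset, misIn]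

open Classical in
noncomputable def clN (G : SimpleGraph V) (W c : Finset V) : Finset V :=
  W.filter (fun x => x ∈ c ∨ ∃ y ∈ c, G.Adj y x)

lemma mem_clN {G : SimpleGraph V} {W c : Finset V} {x : V} :
    x ∈ clN G W c ↔ x ∈ W ∧ (x ∈ c ∨ ∃ y ∈ c, G.Adj y x) := by
  classical
  simp [clN]

lemma clN_subset (G : SimpleGraph V) (W c : Finset V) : clN G W c ⊆ W :=
  fun _ hx => (mem_clN.mp hx).1

lemma remGen (G : SimpleGraph V) (W c : Finset V) :
    ((misF G W).filter (fun s => c ⊆ s)).card ≤ misIn G (W \ clN G W c) := by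
  classical
  apply Finset.card_le_card_of_injOn (fun s => s \ c)
  · intro s hs
    rw [Finset.mem_coe, Finset.mem_filter, mem_misF] at hs
    obtain ⟨⟨hsW, hind, hdom⟩, hcs⟩ := hs
    rw [Finset.mem_coe, mem_misF]
    refine ⟨?_, indep_subset hind (sdiff_subset), ?_⟩
    · intro x hx
      rw [Finset.mem_sdiff] at hx ⊢
      refine ⟨hsW hx.1, fun hcl => ?_⟩
      rcases (mem_clN.mp hcl).2 with hxc | ⟨y, hyc, hadj⟩
      · exact hx.2 hxc
      · exact hind (hcs hyc) hx.1 hadj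
    · intro w hw hws
      rw [Finset.mem_sdiff] at hw
      have hwc : w ∉ c := fun h => hw.2 (mem_clN.mpr ⟨hw.1, Or.inl h⟩)
      have hwsf : w ∉ s := fun h => hws (Finset.mem_sdiff.mpr ⟨h, hwc⟩)
      obtain ⟨y, hy, hadj⟩ := hdom w hw.1 hwsf
      refine ⟨y, Finset.mem_sdiff.mpr ⟨hy, fun hyc => ?_⟩, hadj⟩
      exact hw.2 (mem_clN.mpr ⟨hw.1, Or.inr ⟨y, hyc, hadj.symm⟩⟩)
  · intro s1 h1 s2 h2 heq
    simp only [Finset.coe_filter, Set.mem_setOf_eq] at h1 h2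
    dsimp only at heq
    have e1 : s1 = s1 \ c ∪ c := (Finset.sdiff_union_of_subset h1.2).symm
    have e2 : s2 = s2 \ c ∪ c := (Finset.sdiff_union_of_subset h2.2).symm
    rw [e1, e2, heq]

lemma misF_empty (G : SimpleGraph V) : misF G (∅ : Finset V) = {∅} := by
  ext s
  rw [mem_misF, Finset.mem_singleton]
  constructor
  · intro ⟨h1, _, _⟩
    exact Finset.subset_empty.mp h1
  · rintro rfl
    exact ⟨Finset.Subset.refl _, fun a ha => absurd ha (Finset.notMem_empty a),
      fun w hw => absurd hw (Finset.notMem_empty w)⟩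

lemma misIn_empty (G : SimpleGraph V) : misIn G (∅ : Finset V) = 1 := by
  rw [misIn, misF_empty]; rfl

/-- product lemma for components with no cross edges -/
lemma misIn_union (G : SimpleGraph V) (W1 W2 : Finset V) (hd : Disjoint W1 W2)
    (hno : ∀ a ∈ W1, ∀ b ∈ W2, ¬ G.Adj a b) :
    misIn G (W1 ∪ W2) = misIn G W1 * misIn G W2 := by
  classical
  have key : misF G (W1 ∪ W2) = (misF G W1 ×ˢ misF G W2).image (fun p => p.1 ∪ p.2) := by
    ext s
    rw [mem_misF, Finset.mem_image]
    constructor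
    · intro ⟨hsW, hind, hdom⟩
      refine ⟨⟨s ∩ W1, s ∩ W2⟩, ?_, ?_⟩
      · rw [Finset.mem_product, mem_misF, mem_misF]
        constructor
        · refine ⟨Finset.inter_subset_right, indep_subset hind Finset.inter_subset_left, ?_⟩
          intro w hw hws
          have hwsn : w ∉ s := fun h => hws (Finset.mem_inter.mpr ⟨h, hw⟩)
          obtain ⟨y, hy, hadj⟩ := hdom w (Finset.mem_union_left _ hw) hwsn
          rcases Finset.mem_union.mp (hsW hy) with hy1 | hy2
          · exact ⟨y, Finset.mem_inter.mpr ⟨hy, hy1⟩, hadj⟩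
          · exact absurd hadj (hno w hw y hy2)
        · refine ⟨Finset.inter_subset_right, indep_subset hind Finset.inter_subset_left, ?_⟩
          intro w hw hws
          have hwsn : w ∉ s := fun h => hws (Finset.mem_inter.mpr ⟨h, hw⟩)
          obtain ⟨y, hy, hadj⟩ := hdom w (Finset.mem_union_right _ hw) hwsn
          rcases Finset.mem_union.mp (hsW hy) with hy1 | hy2
          · exact absurd hadj.symm (hno y hy1 w hw)
          · exact ⟨y, Finset.mem_inter.mpr ⟨hy, hy2⟩, hadj⟩
      · simp only
        rw [← Finset.inter_union_distrib_left]
        exact Finset.inter_eq_left.mpr hsW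
    · rintro ⟨⟨s1, s2⟩, hp, rfl⟩
      rw [Finset.mem_product, mem_misF, mem_misF] at hp
      obtain ⟨⟨h1W, h1i, h1d⟩, ⟨h2W, h2i, h2d⟩⟩ := hp
      simp only
      refine ⟨Finset.union_subset_union h1W h2W, ?_, ?_⟩
      · intro a ha b hb
        rcases Finset.mem_union.mp ha with ha' | ha' <;> rcases Finset.mem_union.mp hb with hb' | hb'
        · exact h1i ha' hb'
        · exact hno a (h1W ha') b (h2W hb')
        · exact fun h => hno b (h1W hb') a (h2W ha') h.symm
        · exact h2i ha' hb'
      · intro w hw hws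
        rcases Finset.mem_union.mp hw with hw' | hw'
        · obtain ⟨y, hy, hadj⟩ := h1d w hw' (fun h => hws (Finset.mem_union_left _ h))
          exact ⟨y, Finset.mem_union_left _ hy, hadj⟩
        · obtain ⟨y, hy, hadj⟩ := h2d w hw' (fun h => hws (Finset.mem_union_right _ h))
          exact ⟨y, Finset.mem_union_right _ hy, hadj⟩
  rw [misIn, key, Finset.card_image_of_injOn, Finset.card_product]
  · rfl
  · rintro ⟨s1, s2⟩ h1 ⟨t1, t2⟩ h2 heq
    simp only [Finset.coe_product, Set.mem_prod] at h1 h2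
    dsimp only at heq
    have hs1 := (mem_misF.mp (Finset.mem_coe.mp h1.1)).1
    have hs2 := (mem_misF.mp (Finset.mem_coe.mp h1.2)).1
    have ht1 := (mem_misF.mp (Finset.mem_coe.mp h2.1)).1
    have ht2 := (mem_misF.mp (Finset.mem_coe.mp h2.2)).1
    have key2 : ∀ (a1 a2 : Finset V), a1 ⊆ W1 → a2 ⊆ W2 → (a1 ∪ a2) ∩ W1 = a1 := by
      intro a1 a2 ha1 ha2
      ext x
      simp only [Finset.mem_inter, Finset.mem_union]
      constructor
      · rintro ⟨h | h, hw⟩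
        · exact h
        · exact absurd hw (Finset.disjoint_right.mp hd (ha2 h))
      · intro h
        exact ⟨Or.inl h, ha1 h⟩
    have key3 : ∀ (a1 a2 : Finset V), a1 ⊆ W1 → a2 ⊆ W2 → (a1 ∪ a2) ∩ W2 = a2 := by
      intro a1 a2 ha1 ha2
      ext x
      simp only [Finset.mem_inter, Finset.mem_union]
      constructor
      · rintro ⟨h | h, hw⟩
        · exact absurd hw (Finset.disjoint_left.mp hd (ha1 h))
        · exact h
      · intro h
        exact ⟨Or.inr h, ha2 h⟩
    have e1 : s1 = t1 := by
      rw [← key2 s1 s2 hs1 hs2, ← key2 t1 t2 ht1 ht2, heq]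
    have e2 : s2 = t2 := by
      rw [← key3 s1 s2 hs1 hs2, ← key3 t1 t2 ht1 ht2, heq]
    simp [e1, e2]

/-- an edge window has exactly two maximal independent sets -/
lemma misIn_pair (G : SimpleGraph V) {a b : V} (hadj : G.Adj a b) :
    misIn G ({a, b} : Finset V) = 2 := by
  classical
  have hab : a ≠ b := G.ne_of_adj hadj
  have key : misF G ({a, b} : Finset V) = {{a}, {b}} := by
    ext s
    rw [mem_misF]
    constructor
    · intro ⟨hsW, hind, hdom⟩
      by_cases ha : a ∈ s <;> by_cases hb : b ∈ s
      · exact absurd hadj (hind ha hb)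
      · have : s = {a} := by
          refine Finset.Subset.antisymm (fun x hx => ?_) (Finset.singleton_subset_iff.mpr ha)
          rcases Finset.mem_insert.mp (hsW hx) with rfl | hx'
          · exact Finset.mem_singleton_self x
          · rw [Finset.mem_singleton] at hx'; subst hx'; exact absurd hx hb
        simp [this]
      · have : s = {b} := by
          refine Finset.Subset.antisymm (fun x hx => ?_) (Finset.singleton_subset_iff.mpr hb)
          rcases Finset.mem_insert.mp (hsW hx) with rfl | hx'
          · exact absurd hx ha
          · exact hx'
        simp [this]
      · exfalso
        obtain ⟨y, hy, _⟩ := hdom a (Finset.mem_insert_self _ _) ha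
        rcases Finset.mem_insert.mp (hsW hy) with rfl | hy'
        · exact ha hy
        · rw [Finset.mem_singleton] at hy'; subst hy'; exact hb hy
    · intro h
      rcases Finset.mem_insert.mp h with rfl | h
      · refine ⟨by simp, ?_, ?_⟩
        · intro x hx y hy
          rw [Finset.mem_singleton] at hx hy; subst hx; subst hy; exact G.loopless.irrefl _
        · intro w hw hws
          rcases Finset.mem_insert.mp hw with rfl | hw'
          · exact absurd (Finset.mem_singleton_self w) hws
          · rw [Finset.mem_singleton] at hw'; subst hw'
            exact ⟨a, Finset.mem_singleton_self a, hadj.symm⟩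
      · rw [Finset.mem_singleton] at h; subst h
        refine ⟨by simp, ?_, ?_⟩
        · intro x hx y hy
          rw [Finset.mem_singleton] at hx hy; subst hx; subst hy; exact G.loopless.irrefl _
        · intro w hw hws
          rcases Finset.mem_insert.mp hw with rfl | hw'
          · exact ⟨b, Finset.mem_singleton_self b, hadj⟩
          · rw [Finset.mem_singleton] at hw'; subst hw'
            exact absurd (Finset.mem_singleton_self w) hws
  rw [misIn, key]
  have : ({a} : Finset V) ∉ ({{b}} : Finset (Finset V)) := by
    simp only [Finset.mem_singleton]
    intro h
    exact hab (Finset.singleton_injective h)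
  rw [Finset.card_insert_of_notMem this, Finset.card_singleton]


open Classical in
noncomputable def nbr (G : SimpleGraph V) (W : Finset V) (u : V) : Finset V :=
  W.filter (fun x => G.Adj u x)

lemma mem_nbr {G : SimpleGraph V} {W : Finset V} {u x : V} :
    x ∈ nbr G W u ↔ x ∈ W ∧ G.Adj u x := by
  classical
  simp [nbr]

lemma nbr_subset (G : SimpleGraph V) (W : Finset V) (u : V) : nbr G W u ⊆ W :=
  fun _ hx => (mem_nbr.mp hx).1

lemma clN_single {G : SimpleGraph V} {W : Finset V} {u : V} (hu : u ∈ W) :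
    clN G W {u} = insert u (nbr G W u) := by
  ext x
  rw [mem_clN, Finset.mem_insert, mem_nbr]
  constructor
  · rintro ⟨hxW, hx1 | ⟨y, hy, hadj⟩⟩
    · rw [Finset.mem_singleton] at hx1; exact Or.inl hx1
    · rw [Finset.mem_singleton] at hy; subst hy; exact Or.inr ⟨hxW, hadj⟩
  · rintro (rfl | ⟨hxW, hadj⟩)
    · exact ⟨hu, Or.inl (Finset.mem_singleton_self _)⟩
    · exact ⟨hxW, Or.inr ⟨u, Finset.mem_singleton_self _, hadj⟩⟩

lemma card_clN_single {G : SimpleGraph V} {W : Finset V} {u : V} (hu : u ∈ W) :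
    (clN G W {u}).card = (nbr G W u).card + 1 := by
  rw [clN_single hu, Finset.card_insert_of_notMem]
  intro h
  exact G.loopless.irrefl u (mem_nbr.mp h).2

theorem misIn_le_f (G : SimpleGraph V) (hG : G.CliqueFree 3) (W : Finset V) :
    misIn G W ≤ f W.card := by
  classical
  have htri : ∀ a b c : V, G.Adj a b → G.Adj a c → G.Adj b c → False := fun a b c hab hac hbc =>
    hG {a, b, c} (SimpleGraph.is3Clique_triple_iff.mpr ⟨hab, hac, hbc⟩)
  suffices H : ∀ n, ∀ W : Finset V, W.card = n → misIn G W ≤ f n from H _ W rfl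
  intro n
  induction n using Nat.strong_induction_on with
  | _ n ih =>
  intro W hW
  rcases Finset.eq_empty_or_nonempty W with rfl | hne
  · have h0 : n = 0 := by simpa using hW.symm
    subst h0
    rw [misIn_empty, f_zero]
  have hmis_eq : misIn G W = (misF G W).card := rfl
  obtain ⟨v, hv, hmin⟩ := Finset.exists_min_image W (fun u => (nbr G W u).card) hne
  have hn1 : 1 ≤ n := by rw [← hW]; exact Finset.card_pos.mpr hne
  -- the generic one-vertex bound
  have boundU : ∀ u ∈ W, ((misF G W).filter (fun s => u ∈ s)).card
      ≤ f (n - ((nbr G W u).card + 1)) := by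
    intro u hu
    have hfe : (misF G W).filter (fun s => u ∈ s)
        = (misF G W).filter (fun s => ({u} : Finset V) ⊆ s) :=
      Finset.filter_congr (fun s _ => by simp)
    have hclsub := clN_subset G W ({u} : Finset V)
    have hcard : (W \ clN G W {u}).card = n - ((nbr G W u).card + 1) := by
      rw [Finset.card_sdiff_of_subset hclsub, card_clN_single (G := G) hu, hW]
    have hlt : (W \ clN G W {u}).card < n := by
      have h1 : u ∈ clN G W {u} := mem_clN.mpr ⟨hu, Or.inl (Finset.mem_singleton_self _)⟩
      have h2 : 1 ≤ (clN G W {u}).card := Finset.card_pos.mpr ⟨u, h1⟩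
      have h3 := card_clN_single (G := G) hu
      omega
    calc ((misF G W).filter (fun s => u ∈ s)).card
        = ((misF G W).filter (fun s => ({u} : Finset V) ⊆ s)).card := by rw [hfe]
      _ ≤ misIn G (W \ clN G W {u}) := remGen G W {u}
      _ ≤ f (n - ((nbr G W u).card + 1)) := by
          have := ih _ hlt (W \ clN G W {u}) rfl
          rwa [hcard] at this
  have hdeg_le : (nbr G W v).card + 1 ≤ n := by
    rw [← hW]
    have h1 := Finset.card_le_card (clN_subset G W {v})
    rw [card_clN_single (G := G) hv] at h1
    exact h1
  have hcover : ∀ s ∈ misF G W, v ∈ s ∨ ∃ u ∈ nbr G W v, u ∈ s := by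
    intro s hs
    obtain ⟨hsW, hind, hdom⟩ := mem_misF.mp hs
    by_cases hvs : v ∈ s
    · exact Or.inl hvs
    · obtain ⟨y, hy, hadj⟩ := hdom v hv hvs
      exact Or.inr ⟨y, mem_nbr.mpr ⟨hsW hy, hadj⟩, hy⟩
  rcases Nat.lt_or_ge ((nbr G W v).card) 3 with hd3 | hd3
  · have h012 : (nbr G W v).card = 0 ∨ (nbr G W v).card = 1 ∨ (nbr G W v).card = 2 := by omega
    rcases h012 with hdv | hdv | hdv
    -- d = 0 : isolated vertex
    · have hnbre : nbr G W v = ∅ := Finset.card_eq_zero.mp hdv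
      have hsub : misF G W ⊆ (misF G W).filter (fun s => v ∈ s) := by
        intro s hs
        rcases hcover s hs with h | ⟨u, hu, _⟩
        · exact Finset.mem_filter.mpr ⟨hs, h⟩
        · rw [hnbre] at hu; exact absurd hu (Finset.notMem_empty u)
      have b1 := boundU v hv
      rw [hdv] at b1
      calc misIn G W ≤ ((misF G W).filter (fun s => v ∈ s)).card := Finset.card_le_card hsub
        _ ≤ f (n - (0 + 1)) := b1
        _ ≤ f n := f_le_mono (by omega)
    -- d = 1 : pendant vertex
    · obtain ⟨u, hu⟩ := Finset.card_eq_one.mp hdv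
      have huv : u ∈ nbr G W v := by rw [hu]; exact Finset.mem_singleton_self u
      have huW : u ∈ W := (mem_nbr.mp huv).1
      have hadjvu : G.Adj v u := (mem_nbr.mp huv).2
      have hvnbru : v ∈ nbr G W u := mem_nbr.mpr ⟨hv, hadjvu.symm⟩
      have hdu : 1 ≤ (nbr G W u).card := Finset.card_pos.mpr ⟨v, hvnbru⟩
      have hsub : misF G W ⊆ (misF G W).filter (fun s => v ∈ s)
          ∪ (misF G W).filter (fun s => u ∈ s) := by
        intro s hs
        rcases hcover s hs with h | ⟨y, hy, hys⟩
        · exact Finset.mem_union_left _ (Finset.mem_filter.mpr ⟨hs, h⟩)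
        · rw [hu, Finset.mem_singleton] at hy; subst hy
          exact Finset.mem_union_right _ (Finset.mem_filter.mpr ⟨hs, hys⟩)
      have hn2 : 2 ≤ n := by
        rw [← hW]
        have hsub2 : ({v, u} : Finset V) ⊆ W := by
          rw [Finset.insert_subset_iff, Finset.singleton_subset_iff]; exact ⟨hv, huW⟩
        have h2 := Finset.card_le_card hsub2
        rwa [Finset.card_insert_of_notMem (by simpa using G.ne_of_adj hadjvu),
          Finset.card_singleton] at h2
      have hN2 := N2 (n - 2)
      rw [show n - 2 + 2 = n by omega] at hN2
      have b1 := boundU v hv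
      rw [hdv] at b1
      have b2 := boundU u huW
      have b2' : ((misF G W).filter (fun s => u ∈ s)).card ≤ f (n - 2) :=
        le_trans b2 (f_le_mono (by omega))
      have b1' : ((misF G W).filter (fun s => v ∈ s)).card ≤ f (n - 2) :=
        le_trans b1 (f_le_mono (by omega))
      have hcu := Finset.card_union_le ((misF G W).filter (fun s => v ∈ s))
        ((misF G W).filter (fun s => u ∈ s))
      have hcc := Finset.card_le_card hsub
      omega
    -- d = 2 : the delicate case
    · have main : ∀ u1 u2 : V, nbr G W v = {u1, u2} → u1 ≠ u2 →
          (nbr G W u1).card ≤ (nbr G W u2).card → misIn G W ≤ f n := by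
        intro u1 u2 hnbr hne12 hd12
        have hu1v : u1 ∈ nbr G W v := by rw [hnbr]; exact Finset.mem_insert_self _ _
        have hu2v : u2 ∈ nbr G W v := by
          rw [hnbr]; exact Finset.mem_insert_of_mem (Finset.mem_singleton_self _)
        have hu1W : u1 ∈ W := (mem_nbr.mp hu1v).1
        have hu2W : u2 ∈ W := (mem_nbr.mp hu2v).1
        have hadj1 : G.Adj v u1 := (mem_nbr.mp hu1v).2
        have hadj2 : G.Adj v u2 := (mem_nbr.mp hu2v).2
        have hnadj12 : ¬ G.Adj u1 u2 := fun h => htri v u1 u2 hadj1 hadj2 h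
        have hd1ge : 2 ≤ (nbr G W u1).card := by
          have h' : (nbr G W v).card ≤ (nbr G W u1).card := hmin u1 hu1W
          omega
        have hd2ge : 2 ≤ (nbr G W u2).card := le_trans hd1ge hd12
        set I := (nbr G W u1).filter (fun w => w ≠ v ∧ w ≠ u2 ∧ ¬ G.Adj u2 w) with hI
        -- cover
        have hsub : misF G W ⊆ ((misF G W).filter (fun s => v ∈ s)
            ∪ (misF G W).filter (fun s => u1 ∈ s))
            ∪ I.biUnion (fun w => (misF G W).filter (fun s => u2 ∈ s ∧ w ∈ s)) := by
          intro s hs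
          by_cases hvs : v ∈ s
          · exact Finset.mem_union_left _
              (Finset.mem_union_left _ (Finset.mem_filter.mpr ⟨hs, hvs⟩))
          by_cases hu1s : u1 ∈ s
          · exact Finset.mem_union_left _
              (Finset.mem_union_right _ (Finset.mem_filter.mpr ⟨hs, hu1s⟩))
          obtain ⟨hsW, hind, hdom⟩ := mem_misF.mp hs
          have hu2s : u2 ∈ s := by
            obtain ⟨y, hy, hadj⟩ := hdom v hv hvs
            have hynbr : y ∈ nbr G W v := mem_nbr.mpr ⟨hsW hy, hadj⟩
            rw [hnbr] at hynbr
            rcases Finset.mem_insert.mp hynbr with rfl | h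
            · exact absurd hy hu1s
            · rw [Finset.mem_singleton] at h; subst h; exact hy
          obtain ⟨w, hws, hadjw⟩ := hdom u1 hu1W hu1s
          have hwnbr : w ∈ nbr G W u1 := mem_nbr.mpr ⟨hsW hws, hadjw⟩
          have hwv : w ≠ v := fun h => hvs (h ▸ hws)
          have hwu2 : w ≠ u2 := fun h => hnadj12 (h ▸ hadjw)
          have hwadj : ¬ G.Adj u2 w := hind hu2s hws
          refine Finset.mem_union_right _ (Finset.mem_biUnion.mpr ⟨w, ?_, ?_⟩)
          · rw [hI, Finset.mem_filter]; exact ⟨hwnbr, hwv, hwu2, hwadj⟩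
          · exact Finset.mem_filter.mpr ⟨hs, hu2s, hws⟩
        -- per-pair bound
        have pairBound : ∀ w ∈ I,
            ((misF G W).filter (fun s => u2 ∈ s ∧ w ∈ s)).card
              ≤ f (n - ((nbr G W u2).card + 3)) ∧ (nbr G W u2).card + 3 ≤ n := by
          intro w hwI
          rw [hI, Finset.mem_filter, mem_nbr] at hwI
          obtain ⟨⟨hwW, hadj1w⟩, hwv, hwu2, hnadj2w⟩ := hwI
          have hfe : (misF G W).filter (fun s => u2 ∈ s ∧ w ∈ s)
              = (misF G W).filter (fun s => ({u2, w} : Finset V) ⊆ s) :=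
            Finset.filter_congr (fun s _ => by
              rw [Finset.insert_subset_iff, Finset.singleton_subset_iff])
          have hnm1 : u2 ∉ nbr G W u2 := fun h => G.loopless.irrefl u2 (mem_nbr.mp h).2
          have hnm2 : u1 ∉ insert u2 (nbr G W u2) := by
            intro h
            rcases Finset.mem_insert.mp h with h' | h'
            · exact hne12 h'
            · exact hnadj12 ((mem_nbr.mp h').2.symm)
          have hnm3 : w ∉ insert u1 (insert u2 (nbr G W u2)) := by
            intro h
            rcases Finset.mem_insert.mp h with h' | h'
            · exact G.loopless.irrefl u1 (h' ▸ hadj1w)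
            rcases Finset.mem_insert.mp h' with h'' | h''
            · exact hwu2 h''
            · exact hnadj2w (mem_nbr.mp h'').2
          have hsubs : insert w (insert u1 (insert u2 (nbr G W u2))) ⊆ clN G W {u2, w} := by
            intro x hx
            rcases Finset.mem_insert.mp hx with rfl | hx
            · exact mem_clN.mpr ⟨hwW, Or.inl (by simp)⟩
            rcases Finset.mem_insert.mp hx with rfl | hx
            · exact mem_clN.mpr ⟨hu1W, Or.inr ⟨w, by simp, hadj1w.symm⟩⟩
            rcases Finset.mem_insert.mp hx with rfl | hx
            · exact mem_clN.mpr ⟨hu2W, Or.inl (by simp)⟩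
            · exact mem_clN.mpr ⟨(mem_nbr.mp hx).1, Or.inr ⟨u2, by simp, (mem_nbr.mp hx).2⟩⟩
          have hcard3 : (insert w (insert u1 (insert u2 (nbr G W u2)))).card
              = (nbr G W u2).card + 3 := by
            rw [Finset.card_insert_of_notMem hnm3, Finset.card_insert_of_notMem hnm2,
              Finset.card_insert_of_notMem hnm1]
          have hclge : (nbr G W u2).card + 3 ≤ (clN G W {u2, w}).card := by
            have hcc := Finset.card_le_card hsubs
            omega
          have hclle : (clN G W {u2, w}).card ≤ n := by
            rw [← hW]; exact Finset.card_le_card (clN_subset G W {u2, w})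
          have hcardsd : (W \ clN G W {u2, w}).card = n - (clN G W {u2, w}).card := by
            rw [Finset.card_sdiff_of_subset (clN_subset G W {u2, w}), hW]
          have hlt : (W \ clN G W {u2, w}).card < n := by omega
          constructor
          · calc ((misF G W).filter (fun s => u2 ∈ s ∧ w ∈ s)).card
                = ((misF G W).filter (fun s => ({u2, w} : Finset V) ⊆ s)).card := by rw [hfe]
              _ ≤ misIn G (W \ clN G W {u2, w}) := remGen G W {u2, w}
              _ ≤ f ((W \ clN G W {u2, w}).card) := ih _ hlt _ rfl
              _ ≤ f (n - ((nbr G W u2).card + 3)) := f_le_mono (by omega)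
          · omega
        have hIcard : I.card ≤ (nbr G W u1).card - 1 := by
          have hsub' : I ⊆ (nbr G W u1).erase v := by
            intro w hw
            rw [hI, Finset.mem_filter] at hw
            exact Finset.mem_erase.mpr ⟨hw.2.1, hw.1⟩
          have hvmem : v ∈ nbr G W u1 := mem_nbr.mpr ⟨hv, hadj1.symm⟩
          have hcc := Finset.card_le_card hsub'
          rw [Finset.card_erase_of_mem hvmem] at hcc
          omega
        -- base bound with explicit biUnion term
        have b1 := boundU v hv
        rw [hdv] at b1
        have b2 := boundU u1 hu1W
        have hbase : misIn G W ≤ f (n - 3) + f (n - ((nbr G W u1).card + 1))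
            + (I.biUnion (fun w => (misF G W).filter (fun s => u2 ∈ s ∧ w ∈ s))).card := by
          have hcc := Finset.card_le_card hsub
          have hu1 := Finset.card_union_le (((misF G W).filter (fun s => v ∈ s))
            ∪ ((misF G W).filter (fun s => u1 ∈ s)))
            (I.biUnion (fun w => (misF G W).filter (fun s => u2 ∈ s ∧ w ∈ s)))
          have hu2' := Finset.card_union_le ((misF G W).filter (fun s => v ∈ s))
            ((misF G W).filter (fun s => u1 ∈ s))
          have hb1 : ((misF G W).filter (fun s => v ∈ s)).card ≤ f (n - 3) := by
            calc ((misF G W).filter (fun s => v ∈ s)).card ≤ f (n - (2 + 1)) := b1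
              _ = f (n - 3) := by norm_num
          omega
        rcases Finset.eq_empty_or_nonempty I with hIe | ⟨w0, hw0⟩
        · -- no third class
          have hn3 : 3 ≤ n := by
            rw [← hW]
            have hsub3 : ({v, u1, u2} : Finset V) ⊆ W := by
              intro x hx
              rcases Finset.mem_insert.mp hx with rfl | hx
              · exact hv
              rcases Finset.mem_insert.mp hx with rfl | hx
              · exact hu1W
              · rw [Finset.mem_singleton] at hx; subst hx; exact hu2W
            have hnm : v ∉ ({u1, u2} : Finset V) := by
              intro h
              rcases Finset.mem_insert.mp h with h' | h'
              · exact G.loopless.irrefl v (h' ▸ hadj1)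
              · rw [Finset.mem_singleton] at h'
                exact G.loopless.irrefl v (h' ▸ hadj2)
            have hcard3 : ({v, u1, u2} : Finset V).card = 3 := by
              rw [Finset.card_insert_of_notMem hnm,
                Finset.card_insert_of_notMem (by simpa using hne12), Finset.card_singleton]
            calc 3 = ({v, u1, u2} : Finset V).card := hcard3.symm
              _ ≤ W.card := Finset.card_le_card hsub3
          have hzero : (I.biUnion (fun w => (misF G W).filter (fun s => u2 ∈ s ∧ w ∈ s))).card
              = 0 := by
            rw [hIe]; simp
          have h1 : f (n - ((nbr G W u1).card + 1)) ≤ f (n - 3) := f_le_mono (by omega)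
          have hN2 := N2 (n - 3)
          have hmono := f_le_mono (show n - 3 + 2 ≤ n by omega)
          omega
        · have hn5 : (nbr G W u2).card + 3 ≤ n := (pairBound w0 hw0).2
          have hsum : (I.biUnion (fun w => (misF G W).filter (fun s => u2 ∈ s ∧ w ∈ s))).card
              ≤ I.card * f (n - ((nbr G W u2).card + 3)) := by
            calc (I.biUnion (fun w => (misF G W).filter (fun s => u2 ∈ s ∧ w ∈ s))).card
                ≤ ∑ w ∈ I, ((misF G W).filter (fun s => u2 ∈ s ∧ w ∈ s)).card :=
                  Finset.card_biUnion_le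
              _ ≤ ∑ _w ∈ I, f (n - ((nbr G W u2).card + 3)) :=
                  Finset.sum_le_sum (fun w hw => (pairBound w hw).1)
              _ = I.card * f (n - ((nbr G W u2).card + 3)) := by
                  rw [Finset.sum_const, smul_eq_mul]
          have h234 : (nbr G W u1).card = 2 ∨ (nbr G W u1).card = 3
              ∨ 4 ≤ (nbr G W u1).card := by omega
          rcases h234 with hc1 | hc1 | hc1
          · -- d1 = 2
            have hIone : I.card ≤ 1 := by omega
            have hsum' : (I.biUnion (fun w => (misF G W).filter (fun s => u2 ∈ s ∧ w ∈ s))).card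
                ≤ f (n - 5) := by
              calc (I.biUnion (fun w => (misF G W).filter (fun s => u2 ∈ s ∧ w ∈ s))).card
                  ≤ I.card * f (n - ((nbr G W u2).card + 3)) := hsum
                _ ≤ 1 * f (n - ((nbr G W u2).card + 3)) := Nat.mul_le_mul_right _ hIone
                _ = f (n - ((nbr G W u2).card + 3)) := one_mul _
                _ ≤ f (n - 5) := f_le_mono (by omega)
            have h1 : f (n - ((nbr G W u1).card + 1)) ≤ f (n - 3) := f_le_mono (by omega)
            have hN := N5a (n - 5)
            rw [show n - 5 + 2 = n - 3 by omega, show n - 5 + 5 = n by omega] at hN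
            omega
          · -- d1 = 3
            have hItwo : I.card ≤ 2 := by omega
            have hsum' : (I.biUnion (fun w => (misF G W).filter (fun s => u2 ∈ s ∧ w ∈ s))).card
                ≤ 2 * f (n - 6) := by
              calc (I.biUnion (fun w => (misF G W).filter (fun s => u2 ∈ s ∧ w ∈ s))).card
                  ≤ I.card * f (n - ((nbr G W u2).card + 3)) := hsum
                _ ≤ 2 * f (n - ((nbr G W u2).card + 3)) := Nat.mul_le_mul_right _ hItwo
                _ ≤ 2 * f (n - 6) := Nat.mul_le_mul_left _ (f_le_mono (by omega))
            have h1 : f (n - ((nbr G W u1).card + 1)) ≤ f (n - 4) := f_le_mono (by omega)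
            have hN := N5b (n - 6)
            rw [show n - 6 + 3 = n - 3 by omega, show n - 6 + 2 = n - 4 by omega,
              show n - 6 + 6 = n by omega] at hN
            omega
          · -- d1 ≥ 4
            have hsum' : (I.biUnion (fun w => (misF G W).filter (fun s => u2 ∈ s ∧ w ∈ s))).card
                ≤ f (n - 3) := by
              have hN6 := N6 ((nbr G W u1).card - 1) (n - ((nbr G W u2).card + 3)) (by omega)
              calc (I.biUnion (fun w => (misF G W).filter (fun s => u2 ∈ s ∧ w ∈ s))).card
                  ≤ I.card * f (n - ((nbr G W u2).card + 3)) := hsum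
                _ ≤ ((nbr G W u1).card - 1) * f (n - ((nbr G W u2).card + 3)) :=
                    Nat.mul_le_mul_right _ hIcard
                _ ≤ f (n - ((nbr G W u2).card + 3) + ((nbr G W u1).card - 1) + 1) := hN6
                _ ≤ f (n - 3) := f_le_mono (by omega)
            have h1 : f (n - ((nbr G W u1).card + 1)) ≤ f (n - 5) := f_le_mono (by omega)
            have hN := N5a (n - 5)
            rw [show n - 5 + 2 = n - 3 by omega, show n - 5 + 5 = n by omega] at hN
            omega
      obtain ⟨a, b, hab, hnbr⟩ := Finset.card_eq_two.mp hdv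
      rcases le_total ((nbr G W a).card) ((nbr G W b).card) with h | h
      · exact main a b hnbr hab h
      · exact main b a (by rw [hnbr, Finset.pair_comm]) hab.symm h
  · -- d ≥ 3 : min degree at least 3
    have hsub : misF G W ⊆ (insert v (nbr G W v)).biUnion
        (fun u => (misF G W).filter (fun s => u ∈ s)) := by
      intro s hs
      rcases hcover s hs with h | ⟨u, hu, hus⟩
      · exact Finset.mem_biUnion.mpr ⟨v, Finset.mem_insert_self _ _,
          Finset.mem_filter.mpr ⟨hs, h⟩⟩
      · exact Finset.mem_biUnion.mpr ⟨u, Finset.mem_insert_of_mem hu,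
          Finset.mem_filter.mpr ⟨hs, hus⟩⟩
    have hins : insert v (nbr G W v) ⊆ W := by
      intro x hx
      rcases Finset.mem_insert.mp hx with rfl | hx
      · exact hv
      · exact nbr_subset G W v hx
    have hinscard : (insert v (nbr G W v)).card = (nbr G W v).card + 1 := by
      rw [Finset.card_insert_of_notMem]
      intro h
      exact G.loopless.irrefl v (mem_nbr.mp h).2
    have hbound : misIn G W ≤ ((nbr G W v).card + 1) * f (n - ((nbr G W v).card + 1)) := by
      calc misIn G W ≤ ((insert v (nbr G W v)).biUnion
            (fun u => (misF G W).filter (fun s => u ∈ s))).card := Finset.card_le_card hsub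
        _ ≤ ∑ u ∈ insert v (nbr G W v), ((misF G W).filter (fun s => u ∈ s)).card :=
            Finset.card_biUnion_le
        _ ≤ ∑ _u ∈ insert v (nbr G W v), f (n - ((nbr G W v).card + 1)) := by
            apply Finset.sum_le_sum
            intro u hu
            have huW : u ∈ W := hins hu
            calc ((misF G W).filter (fun s => u ∈ s)).card
                ≤ f (n - ((nbr G W u).card + 1)) := boundU u huW
              _ ≤ f (n - ((nbr G W v).card + 1)) := by
                  apply f_le_mono
                  have hm : (nbr G W v).card ≤ (nbr G W u).card := hmin u huW
                  omega
        _ = ((nbr G W v).card + 1) * f (n - ((nbr G W v).card + 1)) := by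
            rw [Finset.sum_const, smul_eq_mul, hinscard]
    have hN4 := N4 ((nbr G W v).card + 1) (by omega) (n - ((nbr G W v).card + 1))
    rw [show n - ((nbr G W v).card + 1) + ((nbr G W v).card + 1) = n by omega] at hN4
    have hmul : ((nbr G W v).card + 1) * f (n - ((nbr G W v).card + 1))
        ≤ f n := hN4
    omega

/-! ### The extremal construction : C₅ plus a perfect matching -/

def R (a b : ℕ) : Prop :=
  (a < 5 ∧ b < 5 ∧ (b = (a + 1) % 5 ∨ a = (b + 1) % 5)) ∨
  (5 ≤ a ∧ 5 ≤ b ∧ a ≠ b ∧ (a + 1) / 2 = (b + 1) / 2)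

def Gstar (n : ℕ) : SimpleGraph (Fin n) where
  Adj i j := R i.val j.val
  symm := by
    constructor; intro i j h
    unfold R at *
    omega
  loopless := by
    constructor; intro i h
    unfold R at h
    omega

lemma Gstar_adj_iff {n : ℕ} {x y : Fin n} : (Gstar n).Adj x y ↔ R x.val y.val := Iff.rfl

lemma Gstar_cliqueFree (n : ℕ) : (Gstar n).CliqueFree 3 := by
  intro t ht
  rw [SimpleGraph.is3Clique_iff] at ht
  obtain ⟨a, b, c, hab, hac, hbc, -⟩ := ht
  have h1 : R a.val b.val := hab
  have h2 : R a.val c.val := hac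
  have h3 : R b.val c.val := hbc
  unfold R at h1 h2 h3
  omega

def vtx (n i : ℕ) (h : i < n) : Fin n := ⟨i, h⟩

@[simp] lemma vtx_val {n i : ℕ} (h : i < n) : (vtx n i h).val = i := rfl

section C5

variable {n : ℕ}

/-- verifying that a diagonal pair of the C₅ is maximal independent -/
lemma C5_pair_maxIn (hn : 5 ≤ n) (i j : ℕ) (hi : i < 5) (hj : j < 5)
    (hnadj : ¬ R i j)
    (hdomall : ∀ m, m < 5 → m ≠ i → m ≠ j → R m i ∨ R m j) :
    MaxIn (Gstar n) ((univ : Finset (Fin n)).filter (fun x => x.val < 5))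
      {vtx n i (by omega), vtx n j (by omega)} := by
  classical
  refine ⟨?_, ?_, ?_⟩
  · intro x hx
    simp only [Finset.mem_insert, Finset.mem_singleton] at hx
    rcases hx with rfl | rfl <;> simp [Finset.mem_filter] <;> omega
  · intro a ha b hb hadj
    simp only [Finset.mem_insert, Finset.mem_singleton] at ha hb
    have hR : R a.val b.val := hadj
    have hRsymm : ∀ x y : ℕ, R x y → R y x := by
      intro x y h; unfold R at *; omega
    have hRirr : ∀ x : ℕ, ¬ R x x := by
      intro x h; unfold R at h; omega
    rcases ha with rfl | rfl <;> rcases hb with rfl | rfl <;>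
      simp only [vtx_val] at hR
    · exact hRirr i hR
    · exact hnadj hR
    · exact hnadj (hRsymm _ _ hR)
    · exact hRirr j hR
  · intro w hw hws
    simp only [Finset.mem_filter, Finset.mem_univ, true_and] at hw
    simp only [Finset.mem_insert, Finset.mem_singleton] at hws
    push_neg at hws
    obtain ⟨hws1, hws2⟩ := hws
    have hwi : w.val ≠ i := by
      intro h
      exact hws1 (Fin.ext (by simpa using h))
    have hwj : w.val ≠ j := by
      intro h
      exact hws2 (Fin.ext (by simpa using h))
    rcases hdomall w.val hw hwi hwj with hR | hR
    · exact ⟨vtx n i (by omega), Finset.mem_insert_self _ _, by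
        rw [Gstar_adj_iff]; simpa using hR⟩
    · exact ⟨vtx n j (by omega), Finset.mem_insert_of_mem (Finset.mem_singleton_self _), by
        rw [Gstar_adj_iff]; simpa using hR⟩

set_option maxHeartbeats 1000000 in
lemma misF_C5 (hn : 5 ≤ n) :
    misF (Gstar n) ((univ : Finset (Fin n)).filter (fun i => i.val < 5)) =
      ({{vtx n 0 (by omega), vtx n 2 (by omega)},
        {vtx n 0 (by omega), vtx n 3 (by omega)},
        {vtx n 1 (by omega), vtx n 3 (by omega)},
        {vtx n 1 (by omega), vtx n 4 (by omega)},
        {vtx n 2 (by omega), vtx n 4 (by omega)}} : Finset (Finset (Fin n))) := by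
  classical
  have h0 : (0:ℕ) < n := by omega
  have h1 : (1:ℕ) < n := by omega
  have h2 : (2:ℕ) < n := by omega
  have h3 : (3:ℕ) < n := by omega
  have h4 : (4:ℕ) < n := by omega
  have hW5 : (univ : Finset (Fin n)).filter (fun i => i.val < 5)
      = {vtx n 0 h0, vtx n 1 h1, vtx n 2 h2, vtx n 3 h3, vtx n 4 h4} := by
    ext x
    simp only [Finset.mem_filter, Finset.mem_univ, true_and, Finset.mem_insert,
      Finset.mem_singleton, Fin.ext_iff, vtx_val]
    omega
  ext s
  rw [mem_misF]
  constructor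
  · intro ⟨hsW, hind, hdom⟩
    have hchar : ∀ x ∈ s, x = vtx n 0 h0 ∨ x = vtx n 1 h1 ∨ x = vtx n 2 h2
        ∨ x = vtx n 3 h3 ∨ x = vtx n 4 h4 := by
      intro x hx
      have := hsW hx
      rw [hW5] at this
      simpa using this
    have hset : ∀ x y : Fin n, x ∈ s → y ∈ s → (∀ z ∈ s, z = x ∨ z = y) → s = {x, y} := by
      intro x y hx hy hz
      ext w
      simp only [Finset.mem_insert, Finset.mem_singleton]
      constructor
      · exact hz w
      · rintro (rfl | rfl) <;> assumption
    have hind' : ∀ (i j : ℕ) (hi : i < n) (hj : j < n), R i j →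
        ¬(vtx n i hi ∈ s ∧ vtx n j hj ∈ s) := by
      rintro i j hi hj hR ⟨ha, hb⟩
      exact hind ha hb (by rw [Gstar_adj_iff]; simpa using hR)
    have hi01 := hind' 0 1 h0 h1 (by unfold R; omega)
    have hi12 := hind' 1 2 h1 h2 (by unfold R; omega)
    have hi23 := hind' 2 3 h2 h3 (by unfold R; omega)
    have hi34 := hind' 3 4 h3 h4 (by unfold R; omega)
    have hi40 := hind' 4 0 h4 h0 (by unfold R; omega)
    -- domination constraints
    have hdomgen : ∀ (i : ℕ) (hi5 : i < 5) (hi : i < n), vtx n i hi ∉ s →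
        ∃ j, j < 5 ∧ R i j ∧ ∃ (hj : j < n), vtx n j hj ∈ s := by
      intro i hi5 hi hins
      obtain ⟨y, hy, hadj⟩ := hdom (vtx n i hi)
        (by rw [hW5]; simp only [Finset.mem_insert, Finset.mem_singleton, Fin.ext_iff, vtx_val]; omega)
        hins
      have hR : R i y.val := by
        have := Gstar_adj_iff.mp hadj
        simpa using this
      have hy5 : y.val < 5 := by unfold R at hR; omega
      refine ⟨y.val, hy5, hR, y.isLt, ?_⟩
      have : vtx n y.val y.isLt = y := Fin.ext rfl
      rwa [this]
    have hdnum : ∀ (i : ℕ) (hi5 : i < 5) (hi : i < n), vtx n i hi ∉ s →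
        (∃ (hj : (i+1) % 5 < n), vtx n ((i+1) % 5) hj ∈ s)
        ∨ (∃ (hj : (i+4) % 5 < n), vtx n ((i+4) % 5) hj ∈ s) := by
      intro i hi5 hi hins
      obtain ⟨j, hj5, hR, hj, hjs⟩ := hdomgen i hi5 hi hins
      have : j = (i+1) % 5 ∨ j = (i+4) % 5 := by unfold R at hR; omega
      rcases this with rfl | rfl
      · exact Or.inl ⟨hj, hjs⟩
      · exact Or.inr ⟨hj, hjs⟩
    have hvtx_eq : ∀ (i j : ℕ) (hi : i < n) (hj : j < n), i = j → vtx n i hi = vtx n j hj := by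
      intro i j hi hj h
      subst h
      rfl
    have hd0 : vtx n 0 h0 ∉ s → (vtx n 1 h1 ∈ s ∨ vtx n 4 h4 ∈ s) := by
      intro hna
      rcases hdnum 0 (by omega) h0 hna with ⟨hj, hjs⟩ | ⟨hj, hjs⟩
      · exact Or.inl (by rwa [hvtx_eq 1 ((0+1)%5) h1 hj (by norm_num)])
      · exact Or.inr (by rwa [hvtx_eq 4 ((0+4)%5) h4 hj (by norm_num)])
    have hd1 : vtx n 1 h1 ∉ s → (vtx n 2 h2 ∈ s ∨ vtx n 0 h0 ∈ s) := by
      intro hna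
      rcases hdnum 1 (by omega) h1 hna with ⟨hj, hjs⟩ | ⟨hj, hjs⟩
      · exact Or.inl (by rwa [hvtx_eq 2 ((1+1)%5) h2 hj (by norm_num)])
      · exact Or.inr (by rwa [hvtx_eq 0 ((1+4)%5) h0 hj (by norm_num)])
    have hd2 : vtx n 2 h2 ∉ s → (vtx n 3 h3 ∈ s ∨ vtx n 1 h1 ∈ s) := by
      intro hna
      rcases hdnum 2 (by omega) h2 hna with ⟨hj, hjs⟩ | ⟨hj, hjs⟩
      · exact Or.inl (by rwa [hvtx_eq 3 ((2+1)%5) h3 hj (by norm_num)])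
      · exact Or.inr (by rwa [hvtx_eq 1 ((2+4)%5) h1 hj (by norm_num)])
    have hd3 : vtx n 3 h3 ∉ s → (vtx n 4 h4 ∈ s ∨ vtx n 2 h2 ∈ s) := by
      intro hna
      rcases hdnum 3 (by omega) h3 hna with ⟨hj, hjs⟩ | ⟨hj, hjs⟩
      · exact Or.inl (by rwa [hvtx_eq 4 ((3+1)%5) h4 hj (by norm_num)])
      · exact Or.inr (by rwa [hvtx_eq 2 ((3+4)%5) h2 hj (by norm_num)])
    have hd4 : vtx n 4 h4 ∉ s → (vtx n 0 h0 ∈ s ∨ vtx n 3 h3 ∈ s) := by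
      intro hna
      rcases hdnum 4 (by omega) h4 hna with ⟨hj, hjs⟩ | ⟨hj, hjs⟩
      · exact Or.inl (by rwa [hvtx_eq 0 ((4+1)%5) h0 hj (by norm_num)])
      · exact Or.inr (by rwa [hvtx_eq 3 ((4+4)%5) h3 hj (by norm_num)])
    simp only [Finset.mem_insert, Finset.mem_singleton]
    by_cases hb0 : vtx n 0 h0 ∈ s <;> by_cases hb1 : vtx n 1 h1 ∈ s <;>
      by_cases hb2 : vtx n 2 h2 ∈ s <;> by_cases hb3 : vtx n 3 h3 ∈ s <;>
      by_cases hb4 : vtx n 4 h4 ∈ s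
    · exfalso; exact absurd ⟨hb0, hb1⟩ hi01
    · exfalso; exact absurd ⟨hb0, hb1⟩ hi01
    · exfalso; exact absurd ⟨hb0, hb1⟩ hi01
    · exfalso; exact absurd ⟨hb0, hb1⟩ hi01
    · exfalso; exact absurd ⟨hb0, hb1⟩ hi01
    · exfalso; exact absurd ⟨hb0, hb1⟩ hi01
    · exfalso; exact absurd ⟨hb0, hb1⟩ hi01
    · exfalso; exact absurd ⟨hb0, hb1⟩ hi01
    · exfalso; exact absurd ⟨hb2, hb3⟩ hi23
    · exfalso; exact absurd ⟨hb2, hb3⟩ hi23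
    · exfalso; exact absurd ⟨hb4, hb0⟩ hi40
    · exact Or.inl (hset _ _ hb0 hb2 (fun z hz => by rcases hchar z hz with rfl | rfl | rfl | rfl | rfl <;> (first | exact Or.inl rfl | exact Or.inr rfl | exact absurd hz hb0 | exact absurd hz hb1 | exact absurd hz hb2 | exact absurd hz hb3 | exact absurd hz hb4)))
    · exfalso; exact absurd ⟨hb3, hb4⟩ hi34
    · exact Or.inr (Or.inl (hset _ _ hb0 hb3 (fun z hz => by rcases hchar z hz with rfl | rfl | rfl | rfl | rfl <;> (first | exact Or.inl rfl | exact Or.inr rfl | exact absurd hz hb0 | exact absurd hz hb1 | exact absurd hz hb2 | exact absurd hz hb3 | exact absurd hz hb4))))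
    · exfalso; exact absurd ⟨hb4, hb0⟩ hi40
    · exfalso; exact (hd2 hb2).elim hb3 hb1
    · exfalso; exact absurd ⟨hb1, hb2⟩ hi12
    · exfalso; exact absurd ⟨hb1, hb2⟩ hi12
    · exfalso; exact absurd ⟨hb1, hb2⟩ hi12
    · exfalso; exact absurd ⟨hb1, hb2⟩ hi12
    · exfalso; exact absurd ⟨hb3, hb4⟩ hi34
    · exact Or.inr (Or.inr (Or.inl (hset _ _ hb1 hb3 (fun z hz => by rcases hchar z hz with rfl | rfl | rfl | rfl | rfl <;> (first | exact Or.inl rfl | exact Or.inr rfl | exact absurd hz hb0 | exact absurd hz hb1 | exact absurd hz hb2 | exact absurd hz hb3 | exact absurd hz hb4)))))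
    · exact Or.inr (Or.inr (Or.inr (Or.inl (hset _ _ hb1 hb4 (fun z hz => by rcases hchar z hz with rfl | rfl | rfl | rfl | rfl <;> (first | exact Or.inl rfl | exact Or.inr rfl | exact absurd hz hb0 | exact absurd hz hb1 | exact absurd hz hb2 | exact absurd hz hb3 | exact absurd hz hb4))))))
    · exfalso; exact (hd3 hb3).elim hb4 hb2
    · exfalso; exact absurd ⟨hb2, hb3⟩ hi23
    · exfalso; exact absurd ⟨hb2, hb3⟩ hi23
    · exact Or.inr (Or.inr (Or.inr (Or.inr (hset _ _ hb2 hb4 (fun z hz => by rcases hchar z hz with rfl | rfl | rfl | rfl | rfl <;> (first | exact Or.inl rfl | exact Or.inr rfl | exact absurd hz hb0 | exact absurd hz hb1 | exact absurd hz hb2 | exact absurd hz hb3 | exact absurd hz hb4))))))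
    · exfalso; exact (hd0 hb0).elim hb1 hb4
    · exfalso; exact absurd ⟨hb3, hb4⟩ hi34
    · exfalso; exact (hd0 hb0).elim hb1 hb4
    · exfalso; exact (hd1 hb1).elim hb2 hb0
    · exfalso; exact (hd0 hb0).elim hb1 hb4
  · intro h
    rw [← mem_misF]
    simp only [Finset.mem_insert, Finset.mem_singleton] at h
    rcases h with rfl | rfl | rfl | rfl | rfl <;> rw [mem_misF]
    · exact C5_pair_maxIn hn 0 2 (by omega) (by omega) (by unfold R; omega)
        (by intro m hm hmi hmj; unfold R; omega)
    · exact C5_pair_maxIn hn 0 3 (by omega) (by omega) (by unfold R; omega)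
        (by intro m hm hmi hmj; unfold R; omega)
    · exact C5_pair_maxIn hn 1 3 (by omega) (by omega) (by unfold R; omega)
        (by intro m hm hmi hmj; unfold R; omega)
    · exact C5_pair_maxIn hn 1 4 (by omega) (by omega) (by unfold R; omega)
        (by intro m hm hmi hmj; unfold R; omega)
    · exact C5_pair_maxIn hn 2 4 (by omega) (by omega) (by unfold R; omega)
        (by intro m hm hmi hmj; unfold R; omega)

lemma misIn_C5 (hn : 5 ≤ n) :
    misIn (Gstar n) ((univ : Finset (Fin n)).filter (fun i => i.val < 5)) = 5 := by
  classical
  rw [misIn, misF_C5 hn]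
  have hne : ∀ (a b c d : ℕ) (ha : a < n) (hb : b < n) (hc : c < n) (hd : d < n),
      ((a ≠ c ∧ a ≠ d) ∨ (b ≠ c ∧ b ≠ d)) →
      ({vtx n a ha, vtx n b hb} : Finset (Fin n)) ≠ {vtx n c hc, vtx n d hd} := by
    intro a b c d ha hb hc hd hcase heq
    rcases hcase with ⟨hx1, hx2⟩ | ⟨hx1, hx2⟩
    · have hmem : vtx n a ha ∈ ({vtx n c hc, vtx n d hd} : Finset (Fin n)) := by
        rw [← heq]; exact Finset.mem_insert_self _ _
      simp only [Finset.mem_insert, Finset.mem_singleton, Fin.ext_iff, vtx_val] at hmem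
      omega
    · have hmem : vtx n b hb ∈ ({vtx n c hc, vtx n d hd} : Finset (Fin n)) := by
        rw [← heq]; exact Finset.mem_insert_of_mem (Finset.mem_singleton_self _)
      simp only [Finset.mem_insert, Finset.mem_singleton, Fin.ext_iff, vtx_val] at hmem
      omega
  rw [Finset.card_insert_of_notMem, Finset.card_insert_of_notMem,
    Finset.card_insert_of_notMem, Finset.card_insert_of_notMem, Finset.card_singleton]
  · simp only [Finset.mem_singleton]
    exact hne _ _ _ _ _ _ _ _ (Or.inl (by omega))
  · simp only [Finset.mem_insert, Finset.mem_singleton]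
    push_neg
    exact ⟨hne _ _ _ _ _ _ _ _ (Or.inr (by omega)), hne _ _ _ _ _ _ _ _ (Or.inl (by omega))⟩
  · simp only [Finset.mem_insert, Finset.mem_singleton]
    push_neg
    exact ⟨hne _ _ _ _ _ _ _ _ (Or.inl (by omega)), hne _ _ _ _ _ _ _ _ (Or.inl (by omega)),
      hne _ _ _ _ _ _ _ _ (Or.inl (by omega))⟩
  · simp only [Finset.mem_insert, Finset.mem_singleton]
    push_neg
    exact ⟨hne _ _ _ _ _ _ _ _ (Or.inr (by omega)), hne _ _ _ _ _ _ _ _ (Or.inl (by omega)),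
      hne _ _ _ _ _ _ _ _ (Or.inl (by omega)), hne _ _ _ _ _ _ _ _ (Or.inl (by omega))⟩

end C5

lemma misIn_Wm (n k : ℕ) (hnk : n = 5 + 2 * k) :
    ∀ j, j ≤ k → misIn (Gstar n) ((univ : Finset (Fin n)).filter
      (fun i => 5 ≤ i.val ∧ i.val < 5 + 2 * j)) = 2 ^ j := by
  classical
  intro j
  induction j with
  | zero =>
    intro _
    have he : (univ : Finset (Fin n)).filter (fun i => 5 ≤ i.val ∧ i.val < 5 + 2 * 0) = ∅ := by
      rw [Finset.filter_eq_empty_iff]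
      intro x _
      omega
    rw [he, misIn_empty]
    rfl
  | succ j ihj =>
    intro hjk
    have hj : j ≤ k := by omega
    have hp1 : 5 + 2 * j < n := by omega
    have hp2 : 6 + 2 * j < n := by omega
    have hunion : (univ : Finset (Fin n)).filter (fun i => 5 ≤ i.val ∧ i.val < 5 + 2 * (j+1))
        = (univ.filter (fun i => 5 ≤ i.val ∧ i.val < 5 + 2 * j))
          ∪ {vtx n (5 + 2*j) hp1, vtx n (6 + 2*j) hp2} := by
      ext x
      simp only [Finset.mem_filter, Finset.mem_univ, true_and, Finset.mem_union,
        Finset.mem_insert, Finset.mem_singleton, Fin.ext_iff, vtx_val]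
      omega
    have hdisj : Disjoint (univ.filter (fun i : Fin n => 5 ≤ i.val ∧ i.val < 5 + 2 * j))
        ({vtx n (5 + 2*j) hp1, vtx n (6 + 2*j) hp2} : Finset (Fin n)) := by
      rw [Finset.disjoint_left]
      intro x hx hx2
      simp only [Finset.mem_filter, Finset.mem_univ, true_and] at hx
      simp only [Finset.mem_insert, Finset.mem_singleton, Fin.ext_iff, vtx_val] at hx2
      omega
    have hno : ∀ a ∈ univ.filter (fun i : Fin n => 5 ≤ i.val ∧ i.val < 5 + 2 * j),
        ∀ b ∈ ({vtx n (5 + 2*j) hp1, vtx n (6 + 2*j) hp2} : Finset (Fin n)),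
        ¬ (Gstar n).Adj a b := by
      intro a ha b hb
      simp only [Finset.mem_filter, Finset.mem_univ, true_and] at ha
      simp only [Finset.mem_insert, Finset.mem_singleton] at hb
      rw [Gstar_adj_iff]
      unfold R
      rcases hb with rfl | rfl <;> simp only [vtx_val] <;> omega
    have hadjp : (Gstar n).Adj (vtx n (5 + 2*j) hp1) (vtx n (6 + 2*j) hp2) := by
      rw [Gstar_adj_iff]
      unfold R
      simp only [vtx_val]
      omega
    rw [hunion, misIn_union _ _ _ hdisj hno, ihj hj, misIn_pair _ hadjp]
    ring

end HT

theorem hujter_tuza_odd (n : ℕ) (hn : 5 ≤ n) (hodd : Odd n) :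
    (∀ G : SimpleGraph (Fin n), G.CliqueFree 3 → mis G ≤ 5 * 2 ^ ((n - 5) / 2)) ∧
    (∃ G : SimpleGraph (Fin n), G.CliqueFree 3 ∧ mis G = 5 * 2 ^ ((n - 5) / 2)) := by
  classical
  obtain ⟨m, hm⟩ := hodd
  obtain ⟨k, hnk⟩ : ∃ k, n = 5 + 2 * k := ⟨(n - 5) / 2, by omega⟩
  have hpow : 5 * 2 ^ ((n - 5) / 2) = 5 * 2 ^ k := by
    rw [show (n - 5) / 2 = k by omega]
  have hcard : (Finset.univ : Finset (Fin n)).card = n := by simp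
  have hfn : HT.f n = 5 * 2 ^ k := by
    rw [hnk, show 5 + 2 * k = 2 * k + 5 by ring, HT.f_odd5]
  constructor
  · intro G hG
    have hb := HT.misIn_le_f G hG (Finset.univ : Finset (Fin n))
    rw [hcard] at hb
    rw [HT.mis_eq_misIn, hpow]
    omega
  · refine ⟨HT.Gstar n, HT.Gstar_cliqueFree n, ?_⟩
    rw [HT.mis_eq_misIn, hpow]
    have huniv : (Finset.univ : Finset (Fin n)) =
        (Finset.univ.filter (fun i : Fin n => i.val < 5))
          ∪ (Finset.univ.filter (fun i : Fin n => 5 ≤ i.val ∧ i.val < 5 + 2 * k)) := by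
      ext x
      have := x.isLt
      simp only [Finset.mem_union, Finset.mem_filter, Finset.mem_univ, true_and, true_iff]
      omega
    have hdisj : Disjoint (Finset.univ.filter (fun i : Fin n => i.val < 5))
        (Finset.univ.filter (fun i : Fin n => 5 ≤ i.val ∧ i.val < 5 + 2 * k)) := by
      rw [Finset.disjoint_left]
      intro x hx hx2
      simp only [Finset.mem_filter, Finset.mem_univ, true_and] at hx hx2
      omega
    have hno : ∀ a ∈ Finset.univ.filter (fun i : Fin n => i.val < 5),
        ∀ b ∈ Finset.univ.filter (fun i : Fin n => 5 ≤ i.val ∧ i.val < 5 + 2 * k),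
        ¬ (HT.Gstar n).Adj a b := by
      intro a ha b hb
      simp only [Finset.mem_filter, Finset.mem_univ, true_and] at ha hb
      rw [HT.Gstar_adj_iff]
      unfold HT.R
      omega
    rw [huniv, HT.misIn_union _ _ _ hdisj hno, HT.misIn_C5 (by omega),
      HT.misIn_Wm n k hnk k le_rfl]
end

section
/- For every ε > 0 there exists δ > 0 such that for every positive integer n, every simple graph G on n vertices that contains no induced triangle matching of size k for any integer k ≥ (1−ε)·n/3 satisfies mis(G) < 2^{((log₂ 3)/3 − δ)·n}. -/
noncomputable section
open scoped Classical


namespace KP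


def c3 : ℝ := (3:ℝ) ^ ((1:ℝ)/3)
def rr : ℝ := Real.sqrt 2 / c3
def xx : ℝ := Real.sqrt 2 / 2

lemma c3_pos : 0 < c3 := Real.rpow_pos_of_pos (by norm_num) _
lemma sqrt2_pos : 0 < Real.sqrt 2 := Real.sqrt_pos.mpr (by norm_num)
lemma sqrt2_sq : Real.sqrt 2 ^ 2 = 2 := Real.sq_sqrt (by norm_num)
lemma c3_cube : c3 ^ 3 = 3 := by
  rw [c3, ← Real.rpow_natCast ((3:ℝ) ^ ((1:ℝ)/3)) 3, ← Real.rpow_mul (by norm_num)]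
  norm_num

lemma sqrt2_le_c3 : Real.sqrt 2 ≤ c3 := by
  have h1 : Real.sqrt 2 ^ 6 = 8 := by
    calc Real.sqrt 2 ^ 6 = (Real.sqrt 2 ^ 2) ^ 3 := by ring
      _ = 8 := by rw [sqrt2_sq]; norm_num
  have h2 : c3 ^ 6 = 9 := by
    calc c3 ^ 6 = (c3 ^ 3) ^ 2 := by ring
      _ = 9 := by rw [c3_cube]; norm_num
  have h6 : Real.sqrt 2 ^ 6 ≤ c3 ^ 6 := by rw [h1, h2]; norm_num
  exact le_of_pow_le_pow_left₀ (by norm_num) c3_pos.le h6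

lemma rr_pos : 0 < rr := div_pos sqrt2_pos c3_pos
lemma rr_le_one : rr ≤ 1 := div_le_one_of_le₀ sqrt2_le_c3 c3_pos.le
lemma xx_pos : 0 < xx := div_pos sqrt2_pos (by norm_num)
lemma xx_sq : xx ^ 2 = 1/2 := by
  rw [xx, div_pow, sqrt2_sq]; norm_num
lemma xx_le : xx ≤ 3/4 := by
  rw [xx, div_le_div_iff₀ (by norm_num) (by norm_num)]
  nlinarith [sqrt2_sq, sqrt2_pos]
lemma xx_mul : xx * c3 * rr = 1 := by
  have h2 : Real.sqrt 2 * Real.sqrt 2 = 2 := Real.mul_self_sqrt (by norm_num)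
  have hc : c3 ≠ 0 := c3_pos.ne'
  rw [xx, rr]
  field_simp
  linear_combination h2

/-- key per-branch real estimate -/
lemma step (n s t : ℕ) (hs : s ≤ n) {A : ℝ}
    (hA : A ≤ 3 ^ (((n - s : ℕ) : ℝ)/3) * rr ^ ((n - s) - 3*t)) :
    A ≤ xx ^ s * (3 ^ ((n:ℝ)/3) * rr ^ (n - 3*t)) := by
  refine hA.trans ?_
  have h3 : (3:ℝ) ^ ((n:ℝ)/3) = 3 ^ (((n - s : ℕ) : ℝ)/3) * c3 ^ s := by
    rw [c3, ← Real.rpow_natCast ((3:ℝ) ^ ((1:ℝ)/3)) s, ← Real.rpow_mul (by norm_num),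
      ← Real.rpow_add (by norm_num)]
    congr 1
    rw [Nat.cast_sub hs]
    ring
  have hkey : rr ^ ((n - s) - 3*t) ≤ xx ^ s * c3 ^ s * rr ^ (n - 3*t) := by
    have hrs : (0:ℝ) < rr ^ s := pow_pos rr_pos s
    rw [← mul_le_mul_iff_of_pos_right hrs]
    have h1 : rr ^ ((n - s) - 3*t) * rr ^ s ≤ rr ^ (n - 3*t) := by
      rw [← pow_add]
      exact pow_le_pow_of_le_one rr_pos.le rr_le_one (by omega)
    have h2 : xx ^ s * c3 ^ s * rr ^ (n - 3*t) * rr ^ s = rr ^ (n - 3*t) * (xx * c3 * rr) ^ s := by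
      rw [mul_pow, mul_pow]; ring
    rw [h2, xx_mul, one_pow, mul_one]
    exact h1
  calc 3 ^ (((n - s : ℕ) : ℝ)/3) * rr ^ ((n - s) - 3*t)
      ≤ 3 ^ (((n - s : ℕ) : ℝ)/3) * (xx ^ s * c3 ^ s * rr ^ (n - 3*t)) := by
        exact mul_le_mul_of_nonneg_left hkey (Real.rpow_nonneg (by norm_num) _)
    _ = xx ^ s * (3 ^ ((n:ℝ)/3) * rr ^ (n - 3*t)) := by rw [h3]; ring

lemma sq_le_two_pow {m : ℕ} (hm : 4 ≤ m) : m^2 ≤ 2^m := by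
  induction m with
  | zero => omega
  | succ k ih =>
    rcases Nat.lt_or_ge k 4 with h | h
    · interval_cases k <;> simp_all <;> omega
    · have hk := ih (by omega)
      have : (k+1)^2 ≤ 2 * k^2 := by nlinarith
      calc (k+1)^2 ≤ 2 * k^2 := this
        _ ≤ 2 * 2^k := by omega
        _ = 2^(k+1) := by ring

lemma m_xx_pow_le {m : ℕ} (hm : 4 ≤ m) : (m:ℝ) * xx ^ m ≤ 1 := by
  have h1 : ((m:ℝ) * xx ^ m)^2 ≤ 1 := by
    have : ((m:ℝ) * xx ^ m)^2 = (m:ℝ)^2 * (xx^2)^m := by ring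
    rw [this, xx_sq]
    have h2 : ((m:ℕ)^2 : ℝ) ≤ (2:ℝ)^m := by
      have := sq_le_two_pow hm
      calc ((m:ℕ)^2 : ℝ) ≤ ((2^m : ℕ) : ℝ) := by exact_mod_cast this
        _ = (2:ℝ)^m := by push_cast; ring
    have h2p : (0:ℝ) < 2^m := by positivity
    rw [div_pow, one_pow]
    rw [mul_one_div, div_le_one h2p]
    exact h2
  nlinarith [mul_nonneg (Nat.cast_nonneg m : (0:ℝ) ≤ m) (pow_nonneg xx_pos.le m)]



variable {V : Type} [Fintype V]

/-- closed neighborhood as a finset -/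
def K (G : SimpleGraph V) (u : V) : Finset V :=
  Finset.univ.filter (fun x => x = u ∨ G.Adj u x)

lemma mem_K {G : SimpleGraph V} {u x : V} : x ∈ K G u ↔ x = u ∨ G.Adj u x := by
  simp [K]

lemma self_mem_K (G : SimpleGraph V) (u : V) : u ∈ K G u := mem_K.mpr (Or.inl rfl)

/-- the finset of maximal independent sets -/
def M (G : SimpleGraph V) : Finset (Finset V) :=
  Finset.univ.filter (IsMaxIndepFinset G)

lemma mis_eq_card (G : SimpleGraph V) : mis G = (M G).card := by
  have h : {s : Finset V | IsMaxIndepFinset G s} = ↑(M G) := by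
    ext s; simp [M]
  rw [mis, h, Set.ncard_coe_finset]

/-- restriction of a graph to a finset of vertices -/
def res (G : SimpleGraph V) (s : Finset V) : SimpleGraph {x // x ∈ s} :=
  G.comap Subtype.val

lemma hasITM_res {G : SimpleGraph V} {s : Finset V} {k : ℕ}
    (h : HasInducedTriangleMatching (res G s) k) :
    ∃ f : Fin k → Finset V,
      (∀ i, (f i).card = 3) ∧
      (∀ i j, i ≠ j → Disjoint (f i) (f j)) ∧
      (∀ i, ∀ a ∈ f i, ∀ b ∈ f i, a ≠ b → G.Adj a b) ∧
      (∀ i j, i ≠ j → ∀ a ∈ f i, ∀ b ∈ f j, ¬ G.Adj a b) ∧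
      (∀ i, f i ⊆ s) := by
  obtain ⟨f, h1, h2, h3, h4⟩ := h
  refine ⟨fun i => (f i).map (Function.Embedding.subtype _), ?_, ?_, ?_, ?_, ?_⟩
  · intro i; rw [Finset.card_map]; exact h1 i
  · intro i j hij
    rw [Finset.disjoint_map]
    exact h2 i j hij
  · intro i a ha b hb hab
    simp only [Finset.mem_map, Function.Embedding.coe_subtype] at ha hb
    obtain ⟨a0, ha0, rfl⟩ := ha
    obtain ⟨b0, hb0, rfl⟩ := hb
    exact h3 i a0 ha0 b0 hb0 (fun e => hab (by rw [e]))
  · intro i j hij a ha b hb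
    simp only [Finset.mem_map, Function.Embedding.coe_subtype] at ha hb
    obtain ⟨a0, ha0, rfl⟩ := ha
    obtain ⟨b0, hb0, rfl⟩ := hb
    exact h4 i j hij a0 ha0 b0 hb0
  · intro i a ha
    simp only [Finset.mem_map, Function.Embedding.coe_subtype] at ha
    obtain ⟨a0, _, rfl⟩ := ha
    exact a0.2

lemma hasITM_of_res {G : SimpleGraph V} {s : Finset V} {k : ℕ}
    (h : HasInducedTriangleMatching (res G s) k) :
    HasInducedTriangleMatching G k := by
  obtain ⟨f, h1, h2, h3, h4, _⟩ := hasITM_res h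
  exact ⟨f, h1, h2, h3, h4⟩

lemma hasITM_zero (G : SimpleGraph V) : HasInducedTriangleMatching G 0 :=
  ⟨Fin.elim0, fun i => i.elim0, fun i => i.elim0, fun i => i.elim0, fun i => i.elim0⟩

lemma hasITM_extend {G : SimpleGraph V} {T : Finset V} (hT3 : T.card = 3)
    (hTadj : ∀ a ∈ T, ∀ b ∈ T, a ≠ b → G.Adj a b)
    (hTout : ∀ a ∈ T, ∀ b, b ∉ T → ¬ G.Adj a b)
    {k : ℕ} (h : HasInducedTriangleMatching (res G Tᶜ) k) :
    HasInducedTriangleMatching G (k + 1) := by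
  obtain ⟨f, h1, h2, h3, h4, h5⟩ := hasITM_res h
  have hfT : ∀ i, ∀ a ∈ f i, a ∉ T := by
    intro i a ha
    have := h5 i ha
    exact Finset.mem_compl.mp this
  refine ⟨Fin.cons T f, ?_, ?_, ?_, ?_⟩
  · intro i
    refine Fin.cases ?_ ?_ i
    · exact hT3
    · intro j; exact h1 j
  · intro i j hij
    induction i using Fin.cases with
    | zero =>
      induction j using Fin.cases with
      | zero => exact absurd rfl hij
      | succ j' =>
        simp only [Fin.cons_zero, Fin.cons_succ]
        rw [Finset.disjoint_left]
        intro a haT haf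
        exact hfT j' a haf haT
    | succ i' =>
      induction j using Fin.cases with
      | zero =>
        simp only [Fin.cons_zero, Fin.cons_succ]
        rw [Finset.disjoint_right]
        intro a haT haf
        exact hfT i' a haf haT
      | succ j' =>
        simp only [Fin.cons_succ]
        exact h2 i' j' (fun e => hij (by rw [e]))
  · intro i
    refine Fin.cases ?_ ?_ i
    · simpa using hTadj
    · intro j; simpa using h3 j
  · intro i j hij
    induction i using Fin.cases with
    | zero =>
      induction j using Fin.cases with
      | zero => exact absurd rfl hij
      | succ j' =>
        simp only [Fin.cons_zero, Fin.cons_succ]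
        intro a haT b hbf
        exact hTout a haT b (hfT j' b hbf)
    | succ i' =>
      induction j using Fin.cases with
      | zero =>
        simp only [Fin.cons_zero, Fin.cons_succ]
        intro a haf b hbT hadj
        exact hTout b hbT a (hfT i' a haf) hadj.symm
      | succ j' =>
        simp only [Fin.cons_succ]
        exact h4 i' j' (fun e => hij (by rw [e]))

lemma meets_K {G : SimpleGraph V} (v : V) {S : Finset V} (hS : S ∈ M G) :
    ∃ u ∈ K G v, u ∈ S := by
  by_contra hcon
  push_neg at hcon
  obtain ⟨hind, hmax⟩ := (Finset.mem_filter.mp hS).2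
  have hv : v ∉ S := fun hv => hcon v (self_mem_K G v) hv
  have hins : IsIndepFinset G (insert v S) := by
    intro a ha b hb
    rcases Finset.mem_insert.mp ha with rfl | ha' <;> rcases Finset.mem_insert.mp hb with rfl | hb'
    · exact G.loopless.irrefl _
    · exact fun hadj => hcon b (mem_K.mpr (Or.inr hadj)) hb'
    · exact fun hadj => hcon a (mem_K.mpr (Or.inr hadj.symm)) ha'
    · exact hind ha' hb'
  have heq := hmax _ hins (Finset.subset_insert v S)
  exact hv (by rw [heq]; exact Finset.mem_insert_self v S)

lemma count_le (G : SimpleGraph V) (u : V) (W : Finset V) (hW : ∀ w ∈ W, w ∉ K G u) :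
    ((M G).filter (fun S => u ∈ S ∧ ∀ w ∈ W, w ∉ S)).card
      ≤ mis (res G ((K G u ∪ W)ᶜ)) := by
  classical
  rw [mis_eq_card]
  set C := (K G u ∪ W)ᶜ with hC
  apply Finset.card_le_card_of_injOn (fun S => S.subtype (· ∈ C))
  · -- maps into M (res G C)
    intro S hS
    rw [Finset.mem_coe, Finset.mem_filter] at hS
    obtain ⟨hSM, huS, hWS⟩ := hS
    obtain ⟨hind, hmax⟩ := (Finset.mem_filter.mp hSM).2
    rw [Finset.mem_coe, M, Finset.mem_filter]
    refine ⟨Finset.mem_univ _, ?_, ?_⟩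
    · intro a ha b hb
      rw [Finset.mem_subtype] at ha hb
      exact hind ha hb
    · intro t ht hsub
      refine Finset.Subset.antisymm hsub ?_
      intro y hyt
      rw [Finset.mem_subtype]
      by_contra hyS
      have hyC : (y : V) ∈ C := y.2
      have hynotK : (y : V) ∉ K G u := by
        intro hk
        have : (y : V) ∈ K G u ∪ W := Finset.mem_union_left _ hk
        exact (Finset.mem_compl.mp hyC) this
      have hclaim : ∀ s ∈ S, ¬ G.Adj (y : V) s := by
        intro s hsS hadj
        by_cases hsu : s = u
        · subst hsu
          exact hynotK (mem_K.mpr (Or.inr hadj.symm))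
        · by_cases hsC : s ∈ C
          · have h1 : (⟨s, hsC⟩ : {x // x ∈ C}) ∈ t := hsub (Finset.mem_subtype.mpr hsS)
            exact ht hyt h1 hadj
          · have hsKW : s ∈ K G u ∪ W := by
              by_contra hn
              exact hsC (Finset.mem_compl.mpr hn)
            rcases Finset.mem_union.mp hsKW with h' | h'
            · rcases mem_K.mp h' with rfl | h''
              · exact hsu rfl
              · exact hind huS hsS h''
            · exact hWS s h' hsS
      have hins : IsIndepFinset G (insert (y : V) S) := by
        intro a ha b hb
        rcases Finset.mem_insert.mp ha with rfl | ha' <;>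
          rcases Finset.mem_insert.mp hb with rfl | hb'
        · exact G.loopless.irrefl _
        · exact hclaim b hb'
        · exact fun hadj => hclaim a ha' hadj.symm
        · exact hind ha' hb'
      have heq := hmax _ hins (Finset.subset_insert _ S)
      exact hyS (by rw [heq]; exact Finset.mem_insert_self _ S)
  · -- injective
    intro S1 h1 S2 h2 he
    rw [Finset.mem_coe, Finset.mem_filter] at h1 h2
    obtain ⟨hSM1, huS1, hWS1⟩ := h1
    obtain ⟨hSM2, huS2, hWS2⟩ := h2
    have key : ∀ (A B : Finset V), A ∈ M G → u ∈ A → (∀ w ∈ W, w ∉ A) → u ∈ B →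
        A.subtype (· ∈ C) = B.subtype (· ∈ C) → A ⊆ B := by
      intro A B hAM huA hWA huB heq
      obtain ⟨hindA, _⟩ := (Finset.mem_filter.mp hAM).2
      intro x hx
      by_cases hxC : x ∈ C
      · have : (⟨x, hxC⟩ : {z // z ∈ C}) ∈ A.subtype (· ∈ C) := Finset.mem_subtype.mpr hx
        rw [heq] at this
        exact Finset.mem_subtype.mp this
      · have hxKW : x ∈ K G u ∪ W := by
          by_contra hn
          exact hxC (Finset.mem_compl.mpr hn)
        rcases Finset.mem_union.mp hxKW with h' | h'
        · rcases mem_K.mp h' with rfl | h''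
          · exact huB
          · exact absurd h'' (hindA huA hx)
        · exact absurd hx (hWA x h')
    exact Finset.Subset.antisymm (key S1 S2 hSM1 huS1 hWS1 huS2 he)
      (key S2 S1 hSM2 huS2 hWS2 huS1 he.symm)


lemma xx_le_one : xx ≤ 1 := xx_le.trans (by norm_num)

lemma main_bound : ∀ n : ℕ, ∀ (V : Type) [Fintype V], ∀ G : SimpleGraph V,
    Fintype.card V = n → ∀ t : ℕ, ¬ HasInducedTriangleMatching G (t+1) →
    (mis G : ℝ) ≤ 3 ^ ((n:ℝ)/3) * rr ^ (n - 3*t) := by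
  intro n
  induction n using Nat.strong_induction_on with
  | _ n IH =>
  intro V _ G hcard t hITM
  rcases Nat.eq_zero_or_pos n with rfl | hn
  · -- base case : no vertices
    haveI : IsEmpty V := Fintype.card_eq_zero_iff.mp hcard
    have hempty : ∀ s : Finset V, s = ∅ :=
      fun s => Finset.eq_empty_of_forall_notMem (fun x _ => (IsEmpty.false x))
    have hset : {s : Finset V | IsMaxIndepFinset G s} = {∅} := by
      ext s
      simp only [Set.mem_setOf_eq, Set.mem_singleton_iff]
      constructor
      · intro _; exact hempty s
      · rintro rfl
        exact ⟨fun a ha => absurd ha (by simp), fun u _ _ => (hempty u).symm⟩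
    rw [mis, hset, Set.ncard_singleton]
    simp only [Nat.cast_zero, Nat.cast_one, zero_div, Real.rpow_zero, Nat.zero_sub, pow_zero,
      mul_one]
    norm_num
  -- main case
  haveI : Nonempty V := Fintype.card_pos_iff.mp (hcard ▸ hn)
  obtain ⟨v, -, hmin⟩ := Finset.exists_min_image Finset.univ (fun u => (K G u).card)
    ⟨Classical.arbitrary V, Finset.mem_univ _⟩
  set R : ℝ := 3 ^ ((n:ℝ)/3) * rr ^ (n - 3*t) with hRdef
  have hR0 : 0 ≤ R := mul_nonneg (Real.rpow_nonneg (by norm_num) _) (pow_nonneg rr_pos.le _)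
  have hKn : ∀ u : V, (K G u).card ≤ n := by
    intro u
    rw [← hcard, ← Finset.card_univ]
    exact Finset.card_le_univ _
  -- basic branch bound
  have hbr0 : ∀ (u : V) (W : Finset V), (∀ w ∈ W, w ∉ K G u) → ∀ t' : ℕ,
      ¬ HasInducedTriangleMatching (res G ((K G u ∪ W)ᶜ)) (t'+1) →
      ((((M G).filter (fun S => u ∈ S ∧ ∀ w ∈ W, w ∉ S)).card : ℝ)) ≤
        3 ^ ((((n - (K G u ∪ W).card) : ℕ) : ℝ)/3) * rr ^ ((n - (K G u ∪ W).card) - 3*t') := by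
    intro u W hW t' hIT'
    have hu : u ∈ K G u ∪ W := Finset.mem_union_left _ (self_mem_K G u)
    have hs1 : 1 ≤ (K G u ∪ W).card := Finset.card_pos.mpr ⟨u, hu⟩
    have hsn : (K G u ∪ W).card ≤ n := by
      rw [← hcard, ← Finset.card_univ]
      exact Finset.card_le_univ _
    have hcardC : Fintype.card {x // x ∈ (K G u ∪ W)ᶜ} = n - (K G u ∪ W).card := by
      rw [Fintype.card_coe, Finset.card_compl, hcard]
    have h2 := IH (n - (K G u ∪ W).card) (by omega) _ (res G ((K G u ∪ W)ᶜ)) hcardC t' hIT'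
    have h1 := count_le G u W hW
    calc (((M G).filter (fun S => u ∈ S ∧ ∀ w ∈ W, w ∉ S)).card : ℝ)
        ≤ (mis (res G ((K G u ∪ W)ᶜ)) : ℝ) := by exact_mod_cast h1
      _ ≤ _ := h2
  -- branch bound with xx factor (same t)
  have hbr : ∀ (u : V) (W : Finset V), (∀ w ∈ W, w ∉ K G u) →
      ((((M G).filter (fun S => u ∈ S ∧ ∀ w ∈ W, w ∉ S)).card : ℝ)) ≤
        xx ^ ((K G u ∪ W).card) * R := by
    intro u W hW
    have hIT' : ¬ HasInducedTriangleMatching (res G ((K G u ∪ W)ᶜ)) (t+1) :=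
      fun h => hITM (hasITM_of_res h)
    have hsn : (K G u ∪ W).card ≤ n := by
      rw [← hcard, ← Finset.card_univ]; exact Finset.card_le_univ _
    exact step n _ t hsn (hbr0 u W hW t hIT')
  have hbr' : ∀ (u : V) (W : Finset V) (s0 : ℕ), (∀ w ∈ W, w ∉ K G u) →
      s0 ≤ (K G u ∪ W).card →
      ((((M G).filter (fun S => u ∈ S ∧ ∀ w ∈ W, w ∉ S)).card : ℝ)) ≤ xx ^ s0 * R := by
    intro u W s0 hW hs0
    refine (hbr u W hW).trans ?_
    exact mul_le_mul_of_nonneg_right (pow_le_pow_of_le_one xx_pos.le xx_le_one hs0) hR0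
  set m := (K G v).card with hmdef
  have hm1 : 1 ≤ m := Finset.card_pos.mpr ⟨v, self_mem_K G v⟩
  have goal_eq : (mis G : ℝ) = ((M G).card : ℝ) := by rw [mis_eq_card]
  rcases lt_or_ge m 4 with hm4 | hm4
  · -- m ∈ {1, 2, 3}
    interval_cases m
    · -- m = 1 : K G v = {v}
      have hKv : K G v = {v} := by
        obtain ⟨a, ha⟩ := Finset.card_eq_one.mp hmdef.symm
        have : v ∈ ({a} : Finset V) := ha ▸ self_mem_K G v
        rw [Finset.mem_singleton] at this
        rw [ha, this]
      have hcov : M G ⊆ (M G).filter (fun S => v ∈ S ∧ ∀ w ∈ (∅ : Finset V), w ∉ S) := by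
        intro S hS
        obtain ⟨u, hu, huS⟩ := meets_K v hS
        rw [hKv, Finset.mem_singleton] at hu
        subst hu
        exact Finset.mem_filter.mpr ⟨hS, huS, by simp⟩
      have h1 : ((M G).card : ℝ) ≤ xx ^ 1 * R := by
        refine le_trans ?_ (hbr' v ∅ 1 (by simp) (by rw [Finset.union_empty, ← hmdef]))
        exact_mod_cast Finset.card_le_card hcov
      rw [goal_eq]
      refine h1.trans ?_
      nlinarith [xx_le_one, xx_pos, hR0]
    · -- m = 2 : K G v = {v, a}
      obtain ⟨a, ha⟩ := Finset.card_eq_one.mp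
        (by rw [Finset.card_erase_of_mem (self_mem_K G v), ← hmdef] :
          ((K G v).erase v).card = 1)
      have haK : a ∈ K G v := (Finset.erase_subset _ _) (ha ▸ Finset.mem_singleton_self a)
      have hav : a ≠ v := by
        intro e
        have := ha ▸ Finset.mem_singleton_self a
        rw [e] at this
        exact (Finset.notMem_erase v _) this
      have hKv : K G v = insert v {a} := by
        rw [← ha, Finset.insert_erase (self_mem_K G v)]
      have hcov : M G ⊆
          (M G).filter (fun S => v ∈ S ∧ ∀ w ∈ (∅ : Finset V), w ∉ S) ∪
          (M G).filter (fun S => a ∈ S ∧ ∀ w ∈ (∅ : Finset V), w ∉ S) := by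
        intro S hS
        obtain ⟨u, hu, huS⟩ := meets_K v hS
        rw [hKv, Finset.mem_insert, Finset.mem_singleton] at hu
        rcases hu with rfl | rfl
        · exact Finset.mem_union_left _ (Finset.mem_filter.mpr ⟨hS, huS, by simp⟩)
        · exact Finset.mem_union_right _ (Finset.mem_filter.mpr ⟨hS, huS, by simp⟩)
      have hc : ((M G).card : ℝ) ≤
          (((M G).filter (fun S => v ∈ S ∧ ∀ w ∈ (∅ : Finset V), w ∉ S)).card : ℝ) +
          (((M G).filter (fun S => a ∈ S ∧ ∀ w ∈ (∅ : Finset V), w ∉ S)).card : ℝ) := by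
        have := (Finset.card_le_card hcov).trans (Finset.card_union_le _ _)
        exact_mod_cast this
      have h1 := hbr' v ∅ 2 (by simp) (by rw [Finset.union_empty, ← hmdef])
      have h2 := hbr' a ∅ 2 (by simp) (by rw [Finset.union_empty]; exact hmdef ▸ hmin a (Finset.mem_univ a))
      rw [goal_eq]
      refine (hc.trans (add_le_add h1 h2)).trans ?_
      nlinarith [xx_sq, hR0]
    · -- m = 3
      have herase : ((K G v).erase v).card = 2 := by
        rw [Finset.card_erase_of_mem (self_mem_K G v), ← hmdef]
      obtain ⟨a, b, hab, hE⟩ := Finset.card_eq_two.mp herase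
      have haE : a ∈ (K G v).erase v := hE ▸ (by simp : a ∈ ({a, b} : Finset V))
      have hbE : b ∈ (K G v).erase v := hE ▸ (by simp : b ∈ ({a, b} : Finset V))
      have haK : a ∈ K G v := (Finset.erase_subset _ _) haE
      have hbK : b ∈ K G v := (Finset.erase_subset _ _) hbE
      have hav : a ≠ v := by
        intro e; rw [e] at haE; exact Finset.notMem_erase v _ haE
      have hbv : b ≠ v := by
        intro e; rw [e] at hbE; exact Finset.notMem_erase v _ hbE
      have hva : G.Adj v a := by
        rcases mem_K.mp haK with e | h
        · exact absurd e hav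
        · exact h
      have hvb : G.Adj v b := by
        rcases mem_K.mp hbK with e | h
        · exact absurd e hbv
        · exact h
      have hKv : K G v = insert v {a, b} := by
        rw [← hE, Finset.insert_erase (self_mem_K G v)]
      -- generic 3-class counting
      have hc3 : ∀ F1 F2 F3 : Finset (Finset V), M G ⊆ F1 ∪ F2 ∪ F3 →
          ((M G).card : ℝ) ≤ (F1.card : ℝ) + (F2.card : ℝ) + (F3.card : ℝ) := by
        intro F1 F2 F3 hcov
        have h1 := (Finset.card_le_card hcov).trans (Finset.card_union_le _ _)
        have h2 := Finset.card_union_le F1 F2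
        have : (M G).card ≤ F1.card + F2.card + F3.card := by omega
        exact_mod_cast this
      -- the lossy (non-component) adjacent case, symmetric in a b
      have case3adj : ∀ a' b' : V, G.Adj v a' → G.Adj v b' → G.Adj a' b' →
          K G v = insert v {a', b'} → 4 ≤ (K G a').card → (mis G : ℝ) ≤ R := by
        clear hva hvb haK hbK hav hbv haE hbE hab hE hKv herase
        intro a b hva hvb hadjab hKv hKa4
        have hcov : M G ⊆
            (M G).filter (fun S => v ∈ S ∧ ∀ w ∈ (∅ : Finset V), w ∉ S) ∪
            (M G).filter (fun S => a ∈ S ∧ ∀ w ∈ (∅ : Finset V), w ∉ S) ∪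
            (M G).filter (fun S => b ∈ S ∧ ∀ w ∈ (∅ : Finset V), w ∉ S) := by
          intro S hS
          obtain ⟨u, hu, huS⟩ := meets_K v hS
          rw [hKv, Finset.mem_insert, Finset.mem_insert, Finset.mem_singleton] at hu
          rcases hu with rfl | rfl | rfl
          · exact Finset.mem_union_left _ (Finset.mem_union_left _
              (Finset.mem_filter.mpr ⟨hS, huS, by simp⟩))
          · exact Finset.mem_union_left _ (Finset.mem_union_right _
              (Finset.mem_filter.mpr ⟨hS, huS, by simp⟩))
          · exact Finset.mem_union_right _ (Finset.mem_filter.mpr ⟨hS, huS, by simp⟩)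
        have h1 := hbr' v ∅ 3 (by simp) (by rw [Finset.union_empty, ← hmdef])
        have h2 := hbr' a ∅ 4 (by simp) (by rw [Finset.union_empty]; exact hKa4)
        have h3 := hbr' b ∅ 3 (by simp)
          (by rw [Finset.union_empty]; exact hmdef ▸ hmin b (Finset.mem_univ b))
        rw [goal_eq]
        refine ((hc3 _ _ _ hcov).trans (add_le_add (add_le_add h1 h2) h3)).trans ?_
        have hx3 : xx ^ 3 = xx / 2 := by rw [pow_succ, xx_sq]; ring
        have hx4 : xx ^ 4 = 1 / 4 := by
          rw [show (4:ℕ) = 2*2 from rfl, pow_mul, xx_sq]; norm_num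
        have heq : xx ^ 3 * R + xx ^ 4 * R + xx ^ 3 * R = (xx + 1/4) * R := by
          rw [hx3, hx4]; ring
        rw [heq]
        calc (xx + 1/4) * R ≤ 1 * R :=
              mul_le_mul_of_nonneg_right (by linarith [xx_le]) hR0
          _ = R := one_mul R
      by_cases hadjab : G.Adj a b
      · by_cases hsmall : (K G a).card ≤ 3 ∧ (K G b).card ≤ 3
        · -- triangle component case
          have hTa : K G v ⊆ K G a := by
            intro x hx
            rw [hKv] at hx
            rw [Finset.mem_insert, Finset.mem_insert, Finset.mem_singleton] at hx
            rcases hx with rfl | rfl | rfl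
            · exact mem_K.mpr (Or.inr hva.symm)
            · exact self_mem_K G _
            · exact mem_K.mpr (Or.inr hadjab)
          have hTb : K G v ⊆ K G b := by
            intro x hx
            rw [hKv] at hx
            rw [Finset.mem_insert, Finset.mem_insert, Finset.mem_singleton] at hx
            rcases hx with rfl | rfl | rfl
            · exact mem_K.mpr (Or.inr hvb.symm)
            · exact mem_K.mpr (Or.inr hadjab.symm)
            · exact self_mem_K G _
          have hKa : K G a = K G v :=
            (Finset.eq_of_subset_of_card_le hTa (by rw [← hmdef]; exact hsmall.1)).symm
          have hKb : K G b = K G v :=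
            (Finset.eq_of_subset_of_card_le hTb (by rw [← hmdef]; exact hsmall.2)).symm
          have hTcard : (K G v).card = 3 := hmdef.symm
          have htri : ∀ x ∈ K G v, ∀ y ∈ K G v, x ≠ y → G.Adj x y := by
            intro x hx y hy hxy
            rw [hKv, Finset.mem_insert, Finset.mem_insert, Finset.mem_singleton] at hx hy
            rcases hx with rfl | rfl | rfl <;> rcases hy with rfl | rfl | rfl <;>
              first
                | exact absurd rfl hxy
                | exact hva
                | exact hvb
                | exact hva.symm
                | exact hadjab
                | exact hvb.symm
                | exact hadjab.symm
          have hout : ∀ x ∈ K G v, ∀ y, y ∉ K G v → ¬ G.Adj x y := by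
            intro x hx y hyT hadj
            rw [hKv, Finset.mem_insert, Finset.mem_insert, Finset.mem_singleton] at hx
            rcases hx with rfl | rfl | rfl
            · exact hyT (mem_K.mpr (Or.inr hadj))
            · exact hyT (hKa ▸ mem_K.mpr (Or.inr hadj))
            · exact hyT (hKb ▸ mem_K.mpr (Or.inr hadj))
          obtain ⟨t', rfl⟩ : ∃ t', t = t' + 1 := by
            rcases Nat.eq_zero_or_pos t with rfl | ht
            · exact absurd (hasITM_extend hTcard htri hout (hasITM_zero _)) hITM
            · exact ⟨t - 1, by omega⟩
          have hIT' : ¬ HasInducedTriangleMatching (res G ((K G v)ᶜ)) (t' + 1) := by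
            intro h
            exact hITM (hasITM_extend hTcard htri hout h)
          have hcov : M G ⊆
              (M G).filter (fun S => v ∈ S ∧ ∀ w ∈ (∅ : Finset V), w ∉ S) ∪
              (M G).filter (fun S => a ∈ S ∧ ∀ w ∈ (∅ : Finset V), w ∉ S) ∪
              (M G).filter (fun S => b ∈ S ∧ ∀ w ∈ (∅ : Finset V), w ∉ S) := by
            intro S hS
            obtain ⟨u, hu, huS⟩ := meets_K v hS
            rw [hKv, Finset.mem_insert, Finset.mem_insert, Finset.mem_singleton] at hu
            rcases hu with rfl | rfl | rfl
            · exact Finset.mem_union_left _ (Finset.mem_union_left _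
                (Finset.mem_filter.mpr ⟨hS, huS, by simp⟩))
            · exact Finset.mem_union_left _ (Finset.mem_union_right _
                (Finset.mem_filter.mpr ⟨hS, huS, by simp⟩))
            · exact Finset.mem_union_right _ (Finset.mem_filter.mpr ⟨hS, huS, by simp⟩)
          have h1 := hbr0 v ∅ (by simp) t' (by rwa [Finset.union_empty])
          have h2 := hbr0 a ∅ (by simp) t' (by rwa [Finset.union_empty, hKa])
          have h3 := hbr0 b ∅ (by simp) t' (by rwa [Finset.union_empty, hKb])
          rw [show (K G v ∪ ∅).card = 3 from by rw [Finset.union_empty, ← hmdef]] at h1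
          rw [show (K G a ∪ ∅).card = 3 from by rw [Finset.union_empty, hKa, ← hmdef]] at h2
          rw [show (K G b ∪ ∅).card = 3 from by rw [Finset.union_empty, hKb, ← hmdef]] at h3
          have hn3 : 3 ≤ n := by
            have := hKn v
            omega
          have hexp : (n - 3) - 3 * t' = n - 3 * (t' + 1) := by omega
          have h3R : (3:ℝ) ^ ((n:ℝ)/3) = 3 ^ (((n - 3 : ℕ) : ℝ)/3) * 3 := by
            have hcast : (n:ℝ)/3 = ((n - 3 : ℕ) : ℝ)/3 + 1 := by
              rw [Nat.cast_sub hn3]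
              push_cast
              ring
            rw [hcast, Real.rpow_add (by norm_num), Real.rpow_one]
          rw [goal_eq]
          refine ((hc3 _ _ _ hcov).trans (add_le_add (add_le_add h1 h2) h3)).trans (le_of_eq ?_)
          rw [hRdef, ← hexp, h3R]
          ring
        · -- some vertex of the triangle has an extra neighbor
          push_neg at hsmall
          rcases le_or_gt (K G a).card 3 with h4 | h4
          · have h4b : 4 ≤ (K G b).card := hsmall h4
            exact case3adj b a hvb hva hadjab.symm
              (by rw [hKv]; congr 1; exact Finset.pair_comm a b) h4b
          · exact case3adj a b hva hvb hadjab hKv h4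
      · -- v's two neighbors are non-adjacent
        have hanKb : a ∉ K G b := by
          rw [mem_K]
          push_neg
          exact ⟨hab, fun h => hadjab h.symm⟩
        have hWa : ∀ w ∈ ({a} : Finset V), w ∉ K G b := by
          intro w hw
          rw [Finset.mem_singleton] at hw
          subst hw
          exact hanKb
        have hcov : M G ⊆
            (M G).filter (fun S => v ∈ S ∧ ∀ w ∈ (∅ : Finset V), w ∉ S) ∪
            (M G).filter (fun S => a ∈ S ∧ ∀ w ∈ (∅ : Finset V), w ∉ S) ∪
            (M G).filter (fun S => b ∈ S ∧ ∀ w ∈ ({a} : Finset V), w ∉ S) := by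
          intro S hS
          obtain ⟨u, hu, huS⟩ := meets_K v hS
          rw [hKv, Finset.mem_insert, Finset.mem_insert, Finset.mem_singleton] at hu
          rcases hu with rfl | rfl | rfl
          · exact Finset.mem_union_left _ (Finset.mem_union_left _
              (Finset.mem_filter.mpr ⟨hS, huS, by simp⟩))
          · exact Finset.mem_union_left _ (Finset.mem_union_right _
              (Finset.mem_filter.mpr ⟨hS, huS, by simp⟩))
          · by_cases haS : a ∈ S
            · exact Finset.mem_union_left _ (Finset.mem_union_right _
                (Finset.mem_filter.mpr ⟨hS, haS, by simp⟩))
            · refine Finset.mem_union_right _ (Finset.mem_filter.mpr ⟨hS, huS, ?_⟩)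
              intro w hw
              rw [Finset.mem_singleton] at hw
              subst hw
              exact haS
        have hcardba : (K G b ∪ {a}).card = (K G b).card + 1 := by
          rw [show K G b ∪ {a} = insert a (K G b) from by ext x; simp [or_comm],
            Finset.card_insert_of_notMem hanKb]
        have h1 := hbr' v ∅ 3 (by simp) (by rw [Finset.union_empty, ← hmdef])
        have h2 := hbr' a ∅ 3 (by simp)
          (by rw [Finset.union_empty]; exact hmdef ▸ hmin a (Finset.mem_univ a))
        have h3 := hbr' b ({a} : Finset V) 4 hWa
          (by rw [hcardba]; have := hmdef ▸ hmin b (Finset.mem_univ b); omega)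
        rw [goal_eq]
        refine ((hc3 _ _ _ hcov).trans (add_le_add (add_le_add h1 h2) h3)).trans ?_
        have hx3 : xx ^ 3 = xx / 2 := by rw [pow_succ, xx_sq]; ring
        have hx4 : xx ^ 4 = 1 / 4 := by
          rw [show (4:ℕ) = 2*2 from rfl, pow_mul, xx_sq]; norm_num
        have heq : xx ^ 3 * R + xx ^ 3 * R + xx ^ 4 * R = (xx + 1/4) * R := by
          rw [hx3, hx4]; ring
        rw [heq]
        calc (xx + 1/4) * R ≤ 1 * R :=
              mul_le_mul_of_nonneg_right (by linarith [xx_le]) hR0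
          _ = R := one_mul R
  · -- m ≥ 4 : many branches
    have hcov : M G ⊆ (K G v).biUnion
        (fun u => (M G).filter (fun S => u ∈ S ∧ ∀ w ∈ (∅ : Finset V), w ∉ S)) := by
      intro S hS
      obtain ⟨u, hu, huS⟩ := meets_K v hS
      exact Finset.mem_biUnion.mpr ⟨u, hu, Finset.mem_filter.mpr ⟨hS, huS, by simp⟩⟩
    have hc : ((M G).card : ℝ) ≤
        ∑ u ∈ K G v, (((M G).filter (fun S => u ∈ S ∧ ∀ w ∈ (∅ : Finset V), w ∉ S)).card : ℝ) := by
      have h := (Finset.card_le_card hcov).trans Finset.card_biUnion_le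
      calc ((M G).card : ℝ) ≤
          ((∑ u ∈ K G v, ((M G).filter (fun S => u ∈ S ∧ ∀ w ∈ (∅ : Finset V), w ∉ S)).card : ℕ) : ℝ) := by
            exact_mod_cast h
        _ = _ := by push_cast; rfl
    have hsum : ∑ u ∈ K G v, (((M G).filter
          (fun S => u ∈ S ∧ ∀ w ∈ (∅ : Finset V), w ∉ S)).card : ℝ) ≤ (m : ℝ) * (xx ^ m * R) := by
      calc ∑ u ∈ K G v, (((M G).filter (fun S => u ∈ S ∧ ∀ w ∈ (∅ : Finset V), w ∉ S)).card : ℝ)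
          ≤ ∑ _u ∈ K G v, xx ^ m * R := by
            refine Finset.sum_le_sum ?_
            intro u hu
            exact hbr' u ∅ m (by simp) (by rw [Finset.union_empty]; exact hmin u (Finset.mem_univ u))
        _ = (m : ℝ) * (xx ^ m * R) := by
            rw [Finset.sum_const, ← hmdef, nsmul_eq_mul]
    rw [goal_eq]
    refine (hc.trans hsum).trans ?_
    have hmx := m_xx_pow_le hm4
    nlinarith [hR0, hmx]

lemma sqrt2_lt_c3 : Real.sqrt 2 < c3 := by
  have h1 : Real.sqrt 2 ^ 6 = 8 := by
    calc Real.sqrt 2 ^ 6 = (Real.sqrt 2 ^ 2) ^ 3 := by ring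
      _ = 8 := by rw [sqrt2_sq]; norm_num
  have h2 : c3 ^ 6 = 9 := by
    calc c3 ^ 6 = (c3 ^ 3) ^ 2 := by ring
      _ = 9 := by rw [c3_cube]; norm_num
  have h6 : Real.sqrt 2 ^ 6 < c3 ^ 6 := by rw [h1, h2]; norm_num
  exact lt_of_pow_lt_pow_left₀ 6 c3_pos.le h6

lemma rr_lt_one : rr < 1 := by
  rw [rr, div_lt_one c3_pos]
  exact sqrt2_lt_c3

lemma rr_eq : rr = (2:ℝ) ^ (-(Real.logb 2 3 / 3 - 1/2)) := by
  have h2 : (2:ℝ) ^ (Real.logb 2 3) = 3 :=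
    Real.rpow_logb (by norm_num) (by norm_num) (by norm_num)
  have hL : -(Real.logb 2 3 / 3 - 1/2) = 1/2 + Real.logb 2 3 * (-(1/3)) := by ring
  rw [hL, Real.rpow_add (by norm_num), Real.rpow_mul (by norm_num), h2]
  rw [← Real.sqrt_eq_rpow]
  rw [rr, c3]
  rw [show (-(1/3) : ℝ) = -(1/3) from rfl]
  rw [Real.rpow_neg (by norm_num)]
  rw [div_eq_mul_inv]

lemma beta_pos : 0 < Real.logb 2 3 / 3 - 1/2 := by
  have h := rr_lt_one
  rw [rr_eq] at h
  by_contra hcon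
  push_neg at hcon
  have : (0:ℝ) ≤ -(Real.logb 2 3 / 3 - 1/2) := by linarith
  have h1 : (1:ℝ) = (2:ℝ) ^ (0:ℝ) := (Real.rpow_zero 2).symm
  have h2 : (2:ℝ) ^ (0:ℝ) ≤ (2:ℝ) ^ (-(Real.logb 2 3 / 3 - 1/2)) :=
    Real.rpow_le_rpow_of_exponent_le (by norm_num) this
  linarith [h1 ▸ h2]

end KP

theorem kahn_park_triangle_stability :
    ∀ ε : ℝ, 0 < ε → ∃ δ : ℝ, 0 < δ ∧
      ∀ n : ℕ, 0 < n → ∀ G : SimpleGraph (Fin n),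
        (∀ k : ℕ, (1 - ε) * n / 3 ≤ (k : ℝ) → ¬ HasInducedTriangleMatching G k) →
        (mis G : ℝ) < 2 ^ ((Real.logb 2 3 / 3 - δ) * n) := by
  intro ε hε
  set L : ℝ := Real.logb 2 3 with hLdef
  set β : ℝ := L/3 - 1/2 with hβdef
  have hβ : 0 < β := KP.beta_pos
  refine ⟨β * ε, mul_pos hβ hε, ?_⟩
  intro n hn G hyp
  set x : ℝ := (1 - ε) * n / 3 with hxdef
  have ht0 := hyp ⌈x⌉₊ (Nat.le_ceil x)
  by_cases hx : x ≤ 0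
  · rw [Nat.ceil_eq_zero.mpr hx] at ht0
    exact absurd (KP.hasITM_zero G) ht0
  push_neg at hx
  have hc1 : 1 ≤ ⌈x⌉₊ := Nat.ceil_pos.mpr hx
  obtain ⟨t, htt⟩ : ∃ t, ⌈x⌉₊ = t + 1 := ⟨⌈x⌉₊ - 1, by omega⟩
  rw [htt] at ht0
  have hmain := KP.main_bound n (Fin n) G (by simp) t ht0
  have hceil : (⌈x⌉₊ : ℝ) < x + 1 := Nat.ceil_lt_add_one hx.le
  have h3x : 3 * x = (1 - ε) * n := by rw [hxdef]; ring
  have ht3 : 3 * (t:ℝ) < (1 - ε) * n := by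
    have htc : (t:ℝ) = (⌈x⌉₊:ℝ) - 1 := by rw [htt]; push_cast; ring
    rw [htc]
    calc 3 * ((⌈x⌉₊:ℝ) - 1) < 3 * (x + 1 - 1) := by linarith
      _ = (1 - ε) * n := by rw [← h3x]; ring
  have h3tn : 3 * t ≤ n := by
    have h1 : 3 * (t:ℝ) < n := by nlinarith [Nat.cast_nonneg (α := ℝ) n]
    have h2 : ((3 * t : ℕ) : ℝ) < (n : ℝ) := by push_cast; linarith
    exact (Nat.cast_lt.mp h2).le
  have hE : ((n - 3*t : ℕ) : ℝ) = (n:ℝ) - 3*t := by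
    rw [Nat.cast_sub h3tn]; push_cast; ring
  have hEgt : ε * n < ((n - 3*t : ℕ) : ℝ) := by
    rw [hE]; nlinarith
  have h3n : (3:ℝ) ^ ((n:ℝ)/3) = 2 ^ (L * ((n:ℝ)/3)) := by
    have h2 : (2:ℝ) ^ L = 3 := Real.rpow_logb (by norm_num) (by norm_num) (by norm_num)
    rw [Real.rpow_mul (by norm_num), h2]
  have hrrpow : KP.rr ^ (n - 3*t) = 2 ^ (-β * ((n - 3*t : ℕ):ℝ)) := by
    rw [KP.rr_eq, ← hLdef, ← hβdef,
      ← Real.rpow_natCast ((2:ℝ) ^ (-β)) (n - 3*t), ← Real.rpow_mul (by norm_num)]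
  have hcomb : (mis G : ℝ) ≤ 2 ^ (L * ((n:ℝ)/3) + (-β * ((n - 3*t : ℕ):ℝ))) := by
    rw [Real.rpow_add (by norm_num)]
    rw [h3n, hrrpow] at hmain
    exact hmain
  have hlt : L * ((n:ℝ)/3) + (-β * ((n - 3*t : ℕ):ℝ)) < (L/3 - β * ε) * n := by
    have h1 : β * (ε * n) < β * ((n - 3*t : ℕ):ℝ) := mul_lt_mul_of_pos_left hEgt hβ
    have h2 : (L/3 - β * ε) * n = L * ((n:ℝ)/3) - β * (ε * n) := by ring
    rw [h2]
    clear_value L β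
    linarith
  calc (mis G : ℝ) ≤ 2 ^ (L * ((n:ℝ)/3) + (-β * ((n - 3*t : ℕ):ℝ))) := hcomb
    _ < 2 ^ ((L/3 - β * ε) * n) := Real.rpow_lt_rpow_of_exponent_lt (by norm_num) hlt
end
end
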